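/- arXiv:1112.6284 — 2 statements merged into one kernel-verified Lean document; each statement's English description precedes it below -/
import Mathlib

section
/- Let (G,S) be the Cayley graph of a finitely generated abelian group G = G₁ ⊕ G₂ ≅ ℤ^m ⊕ ⊕_{i=1}^l ℤ_{q_i}, with G₁ the torsion-free part and G₂ the torsion part, and let π_{G₁} : G → G₁ be the natural projection. Then for every d ≥ 0, every f ∈ H^d(G,S) is constant on G₂ (i.e. f(x+w) = f(x) for all x ∈ G and w ∈ G₂), its restriction to G₁ ≅ ℤ^m is the restriction of a polynomial on ℝ^m, and the restriction map gives an identification H^d(G,S) = H^d(G₁, π_{G₁}S). -/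
open MvPolynomial

/-- The discrete Laplacian on the Cayley graph of an abelian group `G` with a finite
(symmetric, listed with possible repetitions, hence a multiset) generating set `S`:
`L^S f x = ∑_{s ∈ S} (f (x + s) - f x)`, counted with multiplicity. -/
def lap {G : Type} [AddCommGroup G] (S : Multiset G) (f : G → ℝ) : G → ℝ := fun x =>
  (S.map fun s => f (x + s) - f x).sum

/-- The squared gradient `|∇f|²(x) = ∑_{s ∈ S} (f (x + s) - f x)²`, with multiplicity. -/
def gradSq {G : Type} [AddCommGroup G] (S : Multiset G) (f : G → ℝ) (x : G) : ℝ :=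
  (S.map fun s => (f (x + s) - f x) ^ 2).sum

/-- The word metric `d^S(x,y)`: the least `k` such that `y - x` is a sum of `k`
elements of `S` (i.e. the combinatorial distance in the Cayley graph). -/
noncomputable def wdist {G : Type} [AddCommGroup G] (S : Multiset G) (x y : G) : ℕ :=
  sInf {k : ℕ | ∃ w : Fin k → G, (∀ i, w i ∈ S) ∧ x + ∑ i, w i = y}

/-- The closed ball `B_R(x) = {y : d^S(x,y) ≤ R}` in the word metric. -/
def ball {G : Type} [AddCommGroup G] (S : Multiset G) (x : G) (R : ℝ) : Set G :=
  {y | (wdist S x y : ℝ) ≤ R}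

/-- The finitely generated abelian group `ℤ^m ⊕ ⊕_{i=1}^l ℤ_{q i}`. -/
abbrev AbG (m l : ℕ) (q : Fin l → ℕ) : Type := (Fin m → ℤ) × (∀ i : Fin l, ZMod (q i))

/-- `H^d(G,S)`: the harmonic functions on `(G,S)` of polynomial growth of order at most `d`
(with respect to a fixed basepoint `p`). -/
noncomputable def HdSet {G : Type} [AddCommGroup G] (S : Multiset G) (p : G) (d : Real) :
    Set (G -> Real) :=
  {u | (forall x, lap S u x = 0) /\
       exists C : Real, forall x, |u x| <= C * ((wdist S p x : Real) + 1) ^ d}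


section DOp
variable {G : Type} [AddCommGroup G]

/-- difference operator -/
def dOp (g : G) (f : G → ℝ) : G → ℝ := fun x => f (x + g) - f x

def dList (ℓ : List G) (f : G → ℝ) : G → ℝ := ℓ.foldr dOp f

@[simp] lemma dList_nil (f : G → ℝ) : dList [] f = f := rfl

@[simp] lemma dList_cons (a : G) (ℓ : List G) (f : G → ℝ) :
    dList (a :: ℓ) f = dOp a (dList ℓ f) := rfl

lemma dList_append (ℓ₁ ℓ₂ : List G) (f : G → ℝ) :
    dList (ℓ₁ ++ ℓ₂) f = dList ℓ₁ (dList ℓ₂ f) := by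
  simp [dList, List.foldr_append]

@[simp] lemma dOp_zero_fun (g : G) : dOp g (0 : G → ℝ) = 0 := by
  funext x; simp [dOp]

@[simp] lemma dList_zero_fun (ℓ : List G) : dList ℓ (0 : G → ℝ) = 0 := by
  induction ℓ with
  | nil => rfl
  | cons a ℓ ih => simp [ih]

lemma dOp_add (g : G) (f₁ f₂ : G → ℝ) : dOp g (f₁ + f₂) = dOp g f₁ + dOp g f₂ := by
  funext x; simp [dOp]; ring

lemma dOp_neg (g : G) (f : G → ℝ) : dOp g (-f) = -(dOp g f) := by
  funext x; simp [dOp]; ring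

lemma dList_add (ℓ : List G) (f₁ f₂ : G → ℝ) :
    dList ℓ (f₁ + f₂) = dList ℓ f₁ + dList ℓ f₂ := by
  induction ℓ with
  | nil => rfl
  | cons a ℓ ih => simp [ih, dOp_add]

lemma dList_neg (ℓ : List G) (f : G → ℝ) : dList ℓ (-f) = -(dList ℓ f) := by
  induction ℓ with
  | nil => rfl
  | cons a ℓ ih => simp [ih, dOp_neg]

lemma dOp_translate (g c : G) (f : G → ℝ) :
    dOp g (fun x => f (x + c)) = fun x => dOp g f (x + c) := by
  funext x; simp [dOp, add_right_comm]

lemma dList_translate (ℓ : List G) (c : G) (f : G → ℝ) :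
    dList ℓ (fun x => f (x + c)) = fun x => dList ℓ f (x + c) := by
  induction ℓ with
  | nil => rfl
  | cons a ℓ ih => simp [ih, dOp_translate]

lemma dOp_addop (g h : G) (f : G → ℝ) :
    dOp (g + h) f = dOp g f + dOp h f + dOp g (dOp h f) := by
  funext x; simp only [dOp, Pi.add_apply]; rw [← add_assoc]; ring

/-- `K S t v`: all `t`-fold differences of `v` along elements of `S` vanish. -/
def Kset (S : Multiset G) (t : ℕ) (v : G → ℝ) : Prop :=
  ∀ ℓ : List G, (∀ a ∈ ℓ, a ∈ S) → ℓ.length = t → dList ℓ v = 0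

lemma Kset_mono {S : Multiset G} {t : ℕ} {v : G → ℝ} (h : Kset S t v) :
    Kset S (t + 1) v := by
  intro ℓ hℓ hlen
  match ℓ, hlen with
  | a :: ℓ', hlen =>
    have : dList ℓ' v = 0 := h ℓ' (fun b hb => hℓ b (List.mem_cons_of_mem a hb))
      (by simpa using hlen)
    simp [this]

lemma Kset_add {S : Multiset G} {t : ℕ} {v w : G → ℝ} (hv : Kset S t v)
    (hw : Kset S t w) : Kset S t (v + w) := by
  intro ℓ hℓ hlen
  rw [dList_add, hv ℓ hℓ hlen, hw ℓ hℓ hlen]; simp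

lemma Kset_neg {S : Multiset G} {t : ℕ} {v : G → ℝ} (hv : Kset S t v) :
    Kset S t (-v) := by
  intro ℓ hℓ hlen
  rw [dList_neg, hv ℓ hℓ hlen]; simp

lemma Kset_translate {S : Multiset G} {t : ℕ} {v : G → ℝ} (hv : Kset S t v) (c : G) :
    Kset S t (fun x => v (x + c)) := by
  intro ℓ hℓ hlen
  rw [dList_translate, hv ℓ hℓ hlen]; funext x; simp

lemma Kset_dOp_mem {S : Multiset G} {t : ℕ} {v : G → ℝ} (hv : Kset S (t + 1) v)
    {a : G} (ha : a ∈ S) : Kset S t (dOp a v) := by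
  intro ℓ hℓ hlen
  have : dList ℓ (dOp a v) = dList (ℓ ++ [a]) v := by
    rw [dList_append]; rfl
  rw [this]
  refine hv (ℓ ++ [a]) ?_ (by simp [hlen])
  intro b hb
  rcases List.mem_append.1 hb with h | h
  · exact hℓ b h
  · rw [List.mem_singleton.1 h]; exact ha

/-- every group element (given generation) acts by lowering `Kset` degree -/
lemma Kset_dOp_all {S : Multiset G}
    (hsym : S.map (fun s => -s) = S)
    (hgen : AddSubgroup.closure {s : G | s ∈ S} = ⊤) (g : G) :
    ∀ t : ℕ, ∀ v : G → ℝ, Kset S (t + 1) v → Kset S t (dOp g v) := by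
  have hmem : g ∈ AddSubgroup.closure {s : G | s ∈ S} := by rw [hgen]; trivial
  induction hmem using AddSubgroup.closure_induction with
  | mem x hx => exact fun t v hv => Kset_dOp_mem hv hx
  | zero =>
    intro t v hv
    have : dOp (0 : G) v = 0 := by funext x; simp [dOp]
    rw [this]
    intro ℓ hℓ hlen; simp
  | add x y hx hy ihx ihy =>
    intro t v hv
    rw [dOp_addop]
    have h1 : Kset S t (dOp x v) := ihx t v hv
    have h2 : Kset S t (dOp y v) := ihy t v hv
    have h3 : Kset S t (dOp x (dOp y v)) := by
      cases t with
      | zero =>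
        -- dOp y v ∈ Kset 0 means it is 0
        have : dOp y v = 0 := h2 [] (by simp) rfl
        rw [this, dOp_zero_fun]
        intro ℓ hℓ hlen; simp
      | succ t' =>
        exact Kset_mono (ihx t' (dOp y v) h2)
    exact Kset_add (Kset_add h1 h2) h3
  | neg x hx ihx =>
    intro t v hv
    have : dOp (-x) v = fun z => -(dOp x v) (z + (-x)) := by
      funext z; simp [dOp]
    rw [this]
    have h1 : Kset S t (dOp x v) := ihx t v hv
    have h2 : Kset S t (-(dOp x v)) := Kset_neg h1
    exact Kset_translate h2 (-x)

lemma Kset_zero_eq {S : Multiset G} {v : G → ℝ} (h : Kset S 0 v) : v = 0 :=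
  h [] (by simp) rfl

lemma dOp_iterate_zero_of_Kset {S : Multiset G}
    (hsym : S.map (fun s => -s) = S)
    (hgen : AddSubgroup.closure {s : G | s ∈ S} = ⊤)
    {k : ℕ} {u : G → ℝ} (hu : Kset S k u) (g : G) :
    (dOp g)^[k] u = 0 := by
  have key : ∀ j : ℕ, j ≤ k → Kset S (k - j) ((dOp g)^[j] u) := by
    intro j
    induction j with
    | zero => intro _; simpa using hu
    | succ j ih =>
      intro hj
      have hj' : j ≤ k := Nat.le_of_succ_le hj
      have h1 := ih hj'
      have : k - j = (k - (j+1)) + 1 := by omega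
      rw [this] at h1
      rw [Function.iterate_succ_apply']
      exact Kset_dOp_all hsym hgen g _ _ h1
  have h0 : Kset S 0 ((dOp g)^[k] u) := by simpa using key k le_rfl
  exact Kset_zero_eq h0

end DOp
section IntLemmas

lemma intConst (f : ℤ → ℝ) (h : ∀ j : ℤ, f (j + 1) = f j) : ∀ j : ℤ, f j = f 0 := by
  intro j
  induction j using Int.induction_on with
  | zero => rfl
  | succ i ih => rw [h i, ih]
  | pred i ih => rw [← ih, ← h (-i - 1)]; ring_nf

lemma telescope (ψ : ℤ → ℝ) (N : ℕ) :
    ψ N - ψ 0 = ∑ i ∈ Finset.range N, (ψ ((i : ℤ) + 1) - ψ i) := by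
  induction N with
  | zero => simp
  | succ N ih =>
    rw [Finset.sum_range_succ, ← ih]
    push_cast; ring

/-- A periodic function on ℤ with vanishing k-th difference is constant (step form). -/
lemma periodic_diff_const (n : ℕ) (hn : 1 ≤ n) :
    ∀ (k : ℕ) (ψ : ℤ → ℝ), (∀ j : ℤ, ψ (j + n) = ψ j) →
      (dOp (1 : ℤ))^[k] ψ = 0 → ∀ j : ℤ, ψ (j + 1) = ψ j := by
  intro k
  induction k with
  | zero =>
    intro ψ _ h0 j
    have h1 : ψ (j+1) = 0 := by rw [show ψ = 0 from h0]; rfl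
    have h2 : ψ j = 0 := by rw [show ψ = 0 from h0]; rfl
    rw [h1, h2]
  | succ k ih =>
    intro ψ hper hk j
    set φ : ℤ → ℝ := dOp (1 : ℤ) ψ with hφ
    have hkφ : (dOp (1 : ℤ))^[k] φ = 0 := by
      rw [hφ, ← Function.iterate_succ_apply]; exact hk
    have hperφ : ∀ j : ℤ, φ (j + n) = φ j := by
      intro j; simp only [hφ, dOp]
      rw [show j + (n:ℤ) + 1 = (j + 1) + n by ring, hper (j+1), hper j]
    have hstep : ∀ j : ℤ, φ (j + 1) = φ j := ih φ hperφ hkφ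
    have hconst : ∀ j : ℤ, φ j = φ 0 := intConst φ hstep
    have htel : ψ (n : ℤ) - ψ 0 = ∑ i ∈ Finset.range n, (ψ ((i:ℤ)+1) - ψ i) :=
      telescope ψ n
    have hzero : ψ (n : ℤ) - ψ 0 = 0 := by
      rw [show ψ (n:ℤ) = ψ (0 + n) by norm_num, hper 0]; ring
    have hsum : ∑ i ∈ Finset.range n, (ψ ((i:ℤ)+1) - ψ i) = n * φ 0 := by
      rw [Finset.sum_congr rfl (fun i _ => by
        have : ψ ((i:ℤ)+1) - ψ i = φ i := rfl
        rw [this, hconst i])]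
      simp [mul_comm]
    have hφ0 : φ 0 = 0 := by
      have : (n : ℝ) * φ 0 = 0 := by rw [← hsum, ← htel, hzero]
      rcases mul_eq_zero.1 this with h | h
      · exact absurd h (by positivity)
      · exact h
    have : φ j = 0 := by rw [hconst j, hφ0]
    have : ψ (j+1) - ψ j = 0 := this
    linarith

noncomputable def bin (i : ℕ) (x : ℝ) : ℝ :=
  (∏ t ∈ Finset.range i, (x - t)) / (i.factorial : ℝ)

@[simp] lemma bin_zero (x : ℝ) : bin 0 x = 1 := by simp [bin]

lemma bin_zero_arg (i : ℕ) (hi : 1 ≤ i) : bin i (0 : ℝ) = 0 := by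
  have h : (∏ t ∈ Finset.range i, ((0:ℝ) - t)) = 0 := by
    apply Finset.prod_eq_zero (i := 0) (Finset.mem_range.2 hi)
    norm_num
  simp only [bin]
  rw [h, zero_div]

lemma bin_pascal (i : ℕ) (x : ℝ) : bin (i+1) (x+1) - bin (i+1) x = bin i x := by
  have h1 : (∏ t ∈ Finset.range (i+1), (x + 1 - t)) = (x+1) * ∏ t ∈ Finset.range i, (x - t) := by
    have hc : ∀ k ∈ Finset.range i, (x + 1 - ((k+1 : ℕ):ℝ)) = (x - (k:ℝ)) := by
      intro k _; push_cast; ring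
    rw [Finset.prod_range_succ', Finset.prod_congr rfl hc]
    push_cast; ring
  have h2 : (∏ t ∈ Finset.range (i+1), (x - t)) = (∏ t ∈ Finset.range i, (x - t)) * (x - i) := by
    rw [Finset.prod_range_succ]
  have hfac : ((i+1).factorial : ℝ) = (i+1) * (i.factorial : ℝ) := by
    rw [Nat.factorial_succ]; push_cast; ring
  simp only [bin, h1, h2, hfac]
  have hne : (i.factorial : ℝ) ≠ 0 := by positivity
  field_simp
  ring

/-- Newton's forward difference formula on ℤ. -/
lemma newton1d : ∀ (k : ℕ) (ψ : ℤ → ℝ), (dOp (1 : ℤ))^[k] ψ = 0 →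
    ∀ x : ℤ, ψ x = ∑ i ∈ Finset.range k, ((dOp (1:ℤ))^[i] ψ 0) * bin i x := by
  intro k
  induction k with
  | zero => intro ψ h0 x; rw [show ψ = 0 from h0]; simp
  | succ k ih =>
    intro ψ hk x
    set φ : ℤ → ℝ := dOp (1 : ℤ) ψ with hφdef
    have hkφ : (dOp (1 : ℤ))^[k] φ = 0 := by
      rw [hφdef, ← Function.iterate_succ_apply]; exact hk
    have IH := ih φ hkφ
    set h : ℤ → ℝ := fun j => ψ j - ∑ i ∈ Finset.range (k+1), ((dOp (1:ℤ))^[i] ψ 0) * bin i j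
      with hdef
    have hstep : ∀ j : ℤ, h (j + 1) = h j := by
      intro j
      have e1 : ∑ i ∈ Finset.range (k+1), ((dOp (1:ℤ))^[i] ψ 0) * bin i ((j:ℝ)+1)
          - ∑ i ∈ Finset.range (k+1), ((dOp (1:ℤ))^[i] ψ 0) * bin i (j:ℝ)
          = ∑ i ∈ Finset.range (k+1), ((dOp (1:ℤ))^[i] ψ 0) * (bin i ((j:ℝ)+1) - bin i (j:ℝ)) := by
        rw [← Finset.sum_sub_distrib]
        apply Finset.sum_congr rfl; intro i _; ring
      have e2 : ∑ i ∈ Finset.range (k+1), ((dOp (1:ℤ))^[i] ψ 0) * (bin i ((j:ℝ)+1) - bin i (j:ℝ))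
          = ∑ i ∈ Finset.range k, ((dOp (1:ℤ))^[i+1] ψ 0) * bin i (j:ℝ) := by
        rw [Finset.sum_range_succ']
        simp only [bin_zero, sub_self, mul_zero, add_zero]
        apply Finset.sum_congr rfl; intro i _
        rw [bin_pascal]
      have e3 : ∑ i ∈ Finset.range k, ((dOp (1:ℤ))^[i+1] ψ 0) * bin i (j:ℝ) = φ j := by
        rw [IH j]
        apply Finset.sum_congr rfl; intro i _
        rw [Function.iterate_succ_apply]
      have e4 : φ j = ψ (j+1) - ψ j := rfl
      simp only [hdef]
      rw [show ((j+1 : ℤ) : ℝ) = (j:ℝ)+1 by push_cast; ring]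
      have esum : ∑ i ∈ Finset.range (k+1), ((dOp (1:ℤ))^[i] ψ 0) * bin i ((j:ℝ)+1)
          - ∑ i ∈ Finset.range (k+1), ((dOp (1:ℤ))^[i] ψ 0) * bin i (j:ℝ) = φ j := by
        rw [e1, e2, e3]
      linarith
    have h0 : h 0 = 0 := by
      simp only [hdef]
      rw [Finset.sum_range_succ']
      have hz : ∀ i ∈ Finset.range k, ((dOp (1:ℤ))^[i+1] ψ 0) * bin (i+1) ((0:ℤ):ℝ) = 0 := by
        intro i _
        rw [show ((0:ℤ):ℝ) = (0:ℝ) by norm_num, bin_zero_arg (i+1) (by omega), mul_zero]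
      rw [Finset.sum_congr rfl hz]
      simp
    have := intConst h hstep x
    rw [h0] at this
    simp only [hdef] at this
    linarith

end IntLemmas

section Wdist
variable {G : Type} [AddCommGroup G]

lemma mem_neg_of_hsym {S : Multiset G} (hsym : S.map (fun s => -s) = S)
    {s : G} (hs : s ∈ S) : -s ∈ S := by
  rw [← hsym]
  exact Multiset.mem_map_of_mem _ hs

lemma wordset_iff_list (S : Multiset G) (x y : G) (k : ℕ) :
    (∃ w : Fin k → G, (∀ i, w i ∈ S) ∧ x + ∑ i, w i = y) ↔
    (∃ L : List G, (∀ a ∈ L, a ∈ S) ∧ L.length = k ∧ x + L.sum = y) := by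
  constructor
  · rintro ⟨w, hw, hsum⟩
    refine ⟨List.ofFn w, ?_, by simp, by rwa [List.sum_ofFn]⟩
    intro a ha
    rcases (List.mem_ofFn).1 ha with ⟨i, rfl⟩
    exact hw i
  · rintro ⟨L, hL, hlen, hsum⟩
    subst hlen
    refine ⟨L.get, fun i => hL _ (List.get_mem L i), ?_⟩
    have : ∑ i, L.get i = (List.ofFn L.get).sum := List.sum_ofFn.symm
    rw [this, List.ofFn_get]
    exact hsum

lemma wdist_le_of_list (S : Multiset G) (x y : G) (L : List G)
    (hL : ∀ a ∈ L, a ∈ S) (hsum : x + L.sum = y) : wdist S x y ≤ L.length := by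
  apply Nat.sInf_le
  exact (wordset_iff_list S x y L.length).2 ⟨L, hL, rfl, hsum⟩

lemma reach_list {S : Multiset G} (hsym : S.map (fun s => -s) = S)
    (hgen : AddSubgroup.closure {s : G | s ∈ S} = ⊤) (g : G) :
    ∃ L : List G, (∀ a ∈ L, a ∈ S) ∧ L.sum = g := by
  have hmem : g ∈ AddSubgroup.closure {s : G | s ∈ S} := by rw [hgen]; trivial
  induction hmem using AddSubgroup.closure_induction with
  | mem x hx => exact ⟨[x], by simpa using hx, by simp⟩
  | zero => exact ⟨[], by simp, by simp⟩
  | add x y _ _ ihx ihy =>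
    obtain ⟨L1, h1, e1⟩ := ihx
    obtain ⟨L2, h2, e2⟩ := ihy
    refine ⟨L1 ++ L2, ?_, by rw [List.sum_append, e1, e2]⟩
    intro a ha
    rcases List.mem_append.1 ha with h | h
    · exact h1 a h
    · exact h2 a h
  | neg x _ ihx =>
    obtain ⟨L, h1, e1⟩ := ihx
    refine ⟨L.map (fun a => -a), ?_, ?_⟩
    · intro a ha
      rcases List.mem_map.1 ha with ⟨b, hb, rfl⟩
      exact mem_neg_of_hsym hsym (h1 b hb)
    · rw [← e1]
      clear h1 e1
      induction L with
      | nil => simp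
      | cons b L ih => simp only [List.map_cons, List.sum_cons, ih]; abel

lemma exists_list_wdist {S : Multiset G} (hsym : S.map (fun s => -s) = S)
    (hgen : AddSubgroup.closure {s : G | s ∈ S} = ⊤) (x y : G) :
    ∃ L : List G, (∀ a ∈ L, a ∈ S) ∧ L.length = wdist S x y ∧ x + L.sum = y := by
  obtain ⟨L, hL, hsum⟩ := reach_list hsym hgen (y - x)
  have hne : {k : ℕ | ∃ w : Fin k → G, (∀ i, w i ∈ S) ∧ x + ∑ i, w i = y}.Nonempty :=
    ⟨L.length, (wordset_iff_list S x y L.length).2 ⟨L, hL, rfl, by rw [hsum]; abel⟩⟩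
  have := Nat.sInf_mem hne
  exact (wordset_iff_list S x y _).1 this

@[simp] lemma wdist_self (S : Multiset G) (x : G) : wdist S x x = 0 := by
  have : wdist S x x ≤ ([] : List G).length :=
    wdist_le_of_list S x x [] (by simp) (by simp)
  simpa using this

lemma wdist_triangle {S : Multiset G} (hsym : S.map (fun s => -s) = S)
    (hgen : AddSubgroup.closure {s : G | s ∈ S} = ⊤) (x y z : G) :
    wdist S x z ≤ wdist S x y + wdist S y z := by
  obtain ⟨L1, h1, len1, e1⟩ := exists_list_wdist hsym hgen x y
  obtain ⟨L2, h2, len2, e2⟩ := exists_list_wdist hsym hgen y z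
  have : wdist S x z ≤ (L1 ++ L2).length := by
    apply wdist_le_of_list S x z (L1 ++ L2)
    · intro a ha
      rcases List.mem_append.1 ha with h | h
      · exact h1 a h
      · exact h2 a h
    · rw [List.sum_append, ← add_assoc, e1, e2]
  simpa [len1, len2] using this

lemma wdist_add_right (S : Multiset G) (x y t : G) :
    wdist S (x + t) (y + t) = wdist S x y := by
  unfold wdist
  congr 1
  ext k
  constructor <;> rintro ⟨w, hw, hsum⟩ <;> refine ⟨w, hw, ?_⟩
  · have h2 : x + t + ∑ i, w i = y + t := hsum
    rw [add_right_comm x t] at h2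
    exact add_right_cancel h2
  · rw [add_right_comm, hsum]

lemma wdist_step {S : Multiset G} {s : G} (hs : s ∈ S) (x : G) :
    wdist S x (x + s) ≤ 1 := by
  simpa using wdist_le_of_list S x (x + s) [s] (by simpa using hs) (by simp)

lemma wdist_succ_le {S : Multiset G} (hsym : S.map (fun s => -s) = S)
    (hgen : AddSubgroup.closure {s : G | s ∈ S} = ⊤)
    {s : G} (hs : s ∈ S) (p x : G) :
    wdist S p (x + s) ≤ wdist S p x + 1 :=
  le_trans (wdist_triangle hsym hgen p x (x+s))
    (by have := wdist_step hs x; omega)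

lemma wdist_pred_le {S : Multiset G} (hsym : S.map (fun s => -s) = S)
    (hgen : AddSubgroup.closure {s : G | s ∈ S} = ⊤)
    {s : G} (hs : s ∈ S) (p x : G) :
    wdist S p x ≤ wdist S p (x + s) + 1 := by
  refine le_trans (wdist_triangle hsym hgen p (x+s) x) ?_
  have : wdist S (x+s) x ≤ 1 := by
    have h := wdist_step (mem_neg_of_hsym hsym hs) (x + s)
    simpa [add_assoc] using h
  omega

end Wdist
section SumHelpers
variable {G : Type} [AddCommGroup G]

lemma sum_multiset_swap {α β : Type*} (S : Multiset α) (T : Finset β) (g : α → β → ℝ) :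
    ∑ x ∈ T, (S.map fun s => g s x).sum = (S.map fun s => ∑ x ∈ T, g s x).sum := by
  induction S using Multiset.induction_on with
  | empty => simp
  | cons a S ih => simp [Finset.sum_add_distrib, ih]

lemma multiset_abs_sum_le (S : Multiset ℝ) : |S.sum| ≤ (S.map fun a => |a|).sum := by
  induction S using Multiset.induction_on with
  | empty => simp
  | cons a S ih =>
    simp only [Multiset.sum_cons, Multiset.map_cons]
    exact le_trans (abs_add_le _ _) (by gcongr)

lemma sum_shift (f : G → ℝ) (c : G) (D T : Finset G)
    (hD : ∀ x, x ∉ D → f x = 0) (hDT : D ⊆ T) (hDT2 : ∀ x ∈ D, x - c ∈ T) :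
    ∑ x ∈ T, f (x + c) = ∑ x ∈ T, f x := by
  classical
  have hinj : ∀ x ∈ T, ∀ y ∈ T, x + c = y + c → x = y := by
    intro x _ y _ h; exact add_right_cancel h
  have h1 : ∑ y ∈ T.image (· + c), f y = ∑ x ∈ T, f (x + c) :=
    Finset.sum_image hinj
  have hDim : D ⊆ T.image (· + c) := by
    intro x hx
    refine Finset.mem_image.2 ⟨x - c, hDT2 x hx, by abel⟩
  have h2 : ∑ y ∈ D, f y = ∑ y ∈ T.image (· + c), f y :=
    Finset.sum_subset hDim (fun x _ hx => hD x hx)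
  have h3 : ∑ y ∈ D, f y = ∑ y ∈ T, f y :=
    Finset.sum_subset hDT (fun x _ hx => hD x hx)
  rw [← h1, ← h2, h3]

end SumHelpers

section Cutoff

lemma clamp_lip (a b : ℝ) : |max 0 (min 1 a) - max 0 (min 1 b)| ≤ |a - b| := by
  have h1 : |max 0 (min 1 a) - max 0 (min 1 b)| ≤ |min 1 a - min 1 b| := by
    rw [max_comm 0 (min 1 a), max_comm 0 (min 1 b)]
    exact abs_max_sub_max_le_abs _ _ _
  refine le_trans h1 ?_
  rcases le_total a 1 with ha | ha <;> rcases le_total b 1 with hb | hb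
  · rw [min_eq_right ha, min_eq_right hb]
  · rw [min_eq_right ha, min_eq_left hb]
    have e1 : |a - 1| = 1 - a := by rw [abs_of_nonpos (by linarith)]; ring
    have e2 : |a - b| = b - a := by rw [abs_of_nonpos (by linarith)]; ring
    linarith
  · rw [min_eq_left ha, min_eq_right hb]
    have e1 : |1 - b| = 1 - b := abs_of_nonneg (by linarith)
    have e2 : |a - b| = a - b := abs_of_nonneg (by linarith)
    linarith
  · rw [min_eq_left ha, min_eq_left hb]
    simp [abs_nonneg]

end Cutoff

section Cacc
variable {G : Type} [AddCommGroup G]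
variable (S : Multiset G) (p : G)

/-- key symmetrization/reindexing identity -/
lemma keyreindex (hsym : S.map (fun s => -s) = S)
    (hgen : AddSubgroup.closure {s : G | s ∈ S} = ⊤)
    (BF : ℕ → Finset G) (hBF : ∀ n x, x ∈ BF n ↔ wdist S p x ≤ n)
    (H : G → G → ℝ) (r : ℕ)
    (h1 : ∀ x, x ∉ BF r → ∀ y, H x y = 0) :
    ∑ x ∈ BF (r+2), (S.map fun s => H x (x+s)).sum
      = ∑ x ∈ BF (r+2), (S.map fun s => H (x+s) x).sum := by
  have hmono : ∀ {a b : ℕ}, a ≤ b → BF a ⊆ BF b := by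
    intro a b hab x hx
    exact (hBF b x).2 (le_trans ((hBF a x).1 hx) hab)
  rw [sum_multiset_swap, sum_multiset_swap]
  have step1 : (S.map fun s => ∑ x ∈ BF (r+2), H x (x+s))
      = S.map fun s => ∑ x ∈ BF (r+2), H (x - s) x := by
    apply Multiset.map_congr rfl
    intro s hs
    have := sum_shift (G := G) (fun y => H y (y + s)) (-s) (BF r) (BF (r+2))
      (fun x hx => h1 x hx _)
      (hmono (by omega))
      (fun x hx => by
        rw [sub_neg_eq_add]
        refine (hBF (r+2) (x + s)).2 ?_
        have hx' := (hBF r x).1 hx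
        have := wdist_succ_le hsym hgen hs p x
        omega)
    -- this : ∑ x ∈ T, H (x + -s) ((x + -s) + s) = ∑ x ∈ T, H x (x + s)
    rw [← this]
    apply Finset.sum_congr rfl
    intro x _
    rw [sub_eq_add_neg, neg_add_cancel_right]
  rw [step1]
  have step2 : (S.map fun s => ∑ x ∈ BF (r+2), H (x - s) x)
      = S.map fun s => ∑ x ∈ BF (r+2), H (x + s) x := by
    conv_lhs => rw [← hsym, Multiset.map_map]
    apply Multiset.map_congr rfl
    intro s _
    simp only [Function.comp]
    apply Finset.sum_congr rfl
    intro x _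
    rw [sub_neg_eq_add]
  rw [step2]

end Cacc
section CaccMain
variable {G : Type} [AddCommGroup G]

lemma amgm (a b D v : ℝ) :
    |D * (a^2 - b^2) * v| ≤ a^2*D^2/4 + b^2*D^2/4 + 2*((a-b)^2*v^2) := by
  have key : ∀ X Y : ℝ, X*Y ≤ X^2/8 + 2*Y^2 := by
    intro X Y; nlinarith [sq_nonneg (X - 4*Y)]
  have h5 := key ((a+b)*D) ((a-b)*v)
  have h6 := key ((a+b)*D) (-((a-b)*v))
  have h7 : ((a+b)*D)^2/8 ≤ a^2*D^2/4 + b^2*D^2/4 := by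
    nlinarith [sq_nonneg ((a-b)*D)]
  rw [abs_le]
  constructor <;> nlinarith [h5, h6, h7]

set_option maxHeartbeats 1000000 in
lemma cacc (S : Multiset G) (p : G)
    (hsym : S.map (fun s => -s) = S)
    (hgen : AddSubgroup.closure {s : G | s ∈ S} = ⊤)
    (BF : ℕ → Finset G) (hBF : ∀ n x, x ∈ BF n ↔ wdist S p x ≤ n)
    (u : G → ℝ) (hu : ∀ x, lap S u x = 0) (n : ℕ) (hn : 1 ≤ n) :
    ∑ x ∈ BF n, gradSq S u x
      ≤ (4 * (Multiset.card S : ℝ) / (n:ℝ)^2) * ∑ x ∈ BF (2*n+1), (u x)^2 := by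
  classical
  have hmono : ∀ {a b : ℕ}, a ≤ b → BF a ⊆ BF b := by
    intro a b hab x hx
    exact (hBF b x).2 (le_trans ((hBF a x).1 hx) hab)
  have hnR : (0:ℝ) < n := by exact_mod_cast hn
  set η : G → ℝ := fun x => max 0 (min 1 ((2*(n:ℝ)+1 - (wdist S p x : ℝ))/(n:ℝ))) with hη
  have η_one : ∀ x : G, wdist S p x ≤ n + 1 → η x = 1 := by
    intro x hx
    have h1 : (1:ℝ) ≤ (2*(n:ℝ)+1 - (wdist S p x : ℝ))/(n:ℝ) := by
      rw [le_div_iff₀ hnR]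
      have : (wdist S p x : ℝ) ≤ (n:ℝ) + 1 := by exact_mod_cast hx
      linarith
    simp only [hη]
    rw [min_eq_left h1, max_eq_right zero_le_one]
  have η_zero : ∀ x : G, 2*n+1 ≤ wdist S p x → η x = 0 := by
    intro x hx
    have h1 : (2*(n:ℝ)+1 - (wdist S p x : ℝ))/(n:ℝ) ≤ 0 := by
      apply div_nonpos_of_nonpos_of_nonneg _ (le_of_lt hnR)
      have : (2*(n:ℝ)+1) ≤ (wdist S p x : ℝ) := by
        have : ((2*n+1 : ℕ) : ℝ) ≤ (wdist S p x : ℝ) := by exact_mod_cast hx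
        push_cast at this; linarith
      linarith
    simp only [hη]
    rw [max_eq_left]
    exact le_trans (min_le_right _ _) h1
  have η_nonneg : ∀ x : G, 0 ≤ η x := fun x => le_max_left _ _
  have η_le_one : ∀ x : G, η x ≤ 1 := by
    intro x
    simp only [hη]
    apply max_le (zero_le_one) (min_le_left _ _)
  have η_diff : ∀ s ∈ S, ∀ x : G, |η (x + s) - η x| ≤ 1/(n:ℝ) := by
    intro s hs x
    have hlip := clamp_lip ((2*(n:ℝ)+1 - (wdist S p (x+s) : ℝ))/(n:ℝ)) ((2*(n:ℝ)+1 - (wdist S p x : ℝ))/(n:ℝ))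
    have e : (2*(n:ℝ)+1 - (wdist S p (x+s) : ℝ))/(n:ℝ) - (2*(n:ℝ)+1 - (wdist S p x : ℝ))/(n:ℝ)
        = ((wdist S p x : ℝ) - (wdist S p (x+s) : ℝ))/(n:ℝ) := by field_simp; ring
    have hwd : |(wdist S p x : ℝ) - (wdist S p (x+s) : ℝ)| ≤ 1 := by
      have h1 := wdist_succ_le hsym hgen hs p x
      have h2 := wdist_pred_le hsym hgen hs p x
      rw [abs_le]
      constructor
      · have : (wdist S p (x+s) : ℝ) ≤ (wdist S p x : ℝ) + 1 := by exact_mod_cast h1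
        linarith
      · have : (wdist S p x : ℝ) ≤ (wdist S p (x+s) : ℝ) + 1 := by exact_mod_cast h2
        linarith
    calc |η (x+s) - η x| ≤ |((wdist S p x : ℝ) - (wdist S p (x+s) : ℝ))/(n:ℝ)| := by
            rw [← e]; exact hlip
      _ = |(wdist S p x : ℝ) - (wdist S p (x+s) : ℝ)|/(n:ℝ) := by rw [abs_div, abs_of_pos hnR]
      _ ≤ 1/(n:ℝ) := by gcongr
  set φ : G → ℝ := fun x => (η x)^2 * u x with hφ
  have φ_zero : ∀ x : G, x ∉ BF (2*n+1) → φ x = 0 := by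
    intro x hx
    have : ¬ (wdist S p x ≤ 2*n+1) := fun h => hx ((hBF _ x).2 h)
    have hz : η x = 0 := η_zero x (by omega)
    simp [hφ, hz]
  set T : Finset G := BF (2*n+1+2) with hT
  -- A = 0
  have hA : ∑ x ∈ T, (S.map fun s => (u (x+s) - u x) * φ x).sum = 0 := by
    apply Finset.sum_eq_zero
    intro x _
    rw [Multiset.sum_map_mul_right]
    have : (S.map fun s => u (x+s) - u x).sum = lap S u x := rfl
    rw [this, hu x, zero_mul]
  -- B = 0 via keyreindex
  have hB : ∑ x ∈ T, (S.map fun s => (u (x+s) - u x) * φ (x+s)).sum = 0 := by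
    have hkr := keyreindex S p hsym hgen BF hBF
      (fun x y => (u y - u x) * φ x) (2*n+1)
      (fun x hx y => by show (u y - u x) * φ x = 0; rw [φ_zero x hx, mul_zero])
    rw [hA] at hkr
    have : ∑ x ∈ T, (S.map fun s => (u (x+s) - u x) * φ (x+s)).sum
        = - ∑ x ∈ T, (S.map fun s => (u x - u (x+s)) * φ (x+s)).sum := by
      rw [← Finset.sum_neg_distrib]
      apply Finset.sum_congr rfl
      intro x _
      rw [← Multiset.sum_map_neg]
      apply congrArg
      apply Multiset.map_congr rfl
      intro s _
      ring
    rw [this, ← hkr]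
    simp
  -- E = 0
  have hE : ∑ x ∈ T, (S.map fun s => (u (x+s) - u x) * (φ (x+s) - φ x)).sum = 0 := by
    have : ∀ x ∈ T, (S.map fun s => (u (x+s) - u x) * (φ (x+s) - φ x)).sum
        = (S.map fun s => (u (x+s) - u x) * φ (x+s)).sum
          - (S.map fun s => (u (x+s) - u x) * φ x).sum := by
      intro x _
      rw [← Multiset.sum_map_sub]
      apply congrArg
      apply Multiset.map_congr rfl
      intro s _
      ring
    rw [Finset.sum_congr rfl this, Finset.sum_sub_distrib, hA, hB, sub_zero]
  set P : ℝ := ∑ x ∈ T, (S.map fun s => (η (x+s))^2 * (u (x+s) - u x)^2).sum with hP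
  set Q : ℝ := ∑ x ∈ T, (S.map fun s => (u (x+s) - u x) * ((η (x+s))^2 - (η x)^2) * u x).sum
    with hQ
  have hPQ : P + Q = 0 := by
    rw [hP, hQ, ← Finset.sum_add_distrib, ← hE]
    apply Finset.sum_congr rfl
    intro x _
    rw [← Multiset.sum_map_add]
    apply congrArg
    apply Multiset.map_congr rfl
    intro s _
    simp only [hφ]
    ring
  have hPb : ∑ x ∈ T, (S.map fun s => (η x)^2 * (u (x+s) - u x)^2).sum = P := by
    have hkr := keyreindex S p hsym hgen BF hBF
      (fun x y => (η x)^2 * (u y - u x)^2) (2*n+1)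
      (fun x hx y => by
        show (η x)^2 * (u y - u x)^2 = 0
        have : ¬ (wdist S p x ≤ 2*n+1) := fun h => hx ((hBF _ x).2 h)
        rw [η_zero x (by omega)]; ring)
    rw [hkr, hP]
    apply Finset.sum_congr rfl
    intro x _
    apply congrArg
    apply Multiset.map_congr rfl
    intro s _
    ring
  set R : ℝ := ∑ x ∈ T, (S.map fun s => (η (x+s) - η x)^2 * (u x)^2).sum with hR
  have hQabs : P ≤ P/4 + P/4 + 2*R := by
    have h1 : P = -Q := by linarith
    have h2 : -Q ≤ |Q| := neg_le_abs Q
    have h3 : |Q| ≤ ∑ x ∈ T, (S.map fun s =>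
        (η (x+s))^2 * (u (x+s) - u x)^2/4 + (η x)^2 * (u (x+s) - u x)^2/4
          + 2*((η (x+s) - η x)^2 * (u x)^2)).sum := by
      refine le_trans (Finset.abs_sum_le_sum_abs _ _) ?_
      apply Finset.sum_le_sum
      intro x _
      refine le_trans (multiset_abs_sum_le _) ?_
      rw [Multiset.map_map]
      apply Multiset.sum_map_le_sum_map
      intro s _
      simp only [Function.comp]
      exact amgm (η (x+s)) (η x) (u (x+s) - u x) (u x)
    have h4 : ∑ x ∈ T, (S.map fun s =>
        (η (x+s))^2 * (u (x+s) - u x)^2/4 + (η x)^2 * (u (x+s) - u x)^2/4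
          + 2*((η (x+s) - η x)^2 * (u x)^2)).sum = P/4 + P/4 + 2*R := by
      have expand : ∀ x ∈ T, (S.map fun s =>
          (η (x+s))^2 * (u (x+s) - u x)^2/4 + (η x)^2 * (u (x+s) - u x)^2/4
            + 2*((η (x+s) - η x)^2 * (u x)^2)).sum
          = (S.map fun s => (η (x+s))^2 * (u (x+s) - u x)^2).sum/4
            + (S.map fun s => (η x)^2 * (u (x+s) - u x)^2).sum/4
            + 2*(S.map fun s => (η (x+s) - η x)^2 * (u x)^2).sum := by
        intro x _
        rw [← Multiset.sum_map_mul_left (a := (2:ℝ)),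
            div_eq_mul_inv, div_eq_mul_inv,
            ← Multiset.sum_map_mul_right (a := (4:ℝ)⁻¹),
            ← Multiset.sum_map_mul_right (a := (4:ℝ)⁻¹),
            ← Multiset.sum_map_add, ← Multiset.sum_map_add]
        apply congrArg
        apply Multiset.map_congr rfl
        intro s _
        ring
      rw [Finset.sum_congr rfl expand, Finset.sum_add_distrib, Finset.sum_add_distrib,
        ← Finset.sum_div, ← Finset.sum_div, ← Finset.mul_sum, hPb]
    linarith [le_trans (le_trans (le_of_eq h1) h2) h3, h4]
  have hPle : P ≤ 4 * R := by linarith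
  -- bound R
  have hRle : R ≤ ((Multiset.card S : ℝ)/(n:ℝ)^2) * ∑ x ∈ BF (2*n+1), (u x)^2 := by
    have hpt : ∀ x ∈ T, (S.map fun s => (η (x+s) - η x)^2 * (u x)^2).sum
        ≤ (if x ∈ BF (2*n+1) then ((Multiset.card S : ℝ)/(n:ℝ)^2) * (u x)^2 else 0) := by
      intro x _
      by_cases hx : x ∈ BF (2*n+1)
      · rw [if_pos hx]
        have hb : ∀ s ∈ S, (η (x+s) - η x)^2 * (u x)^2 ≤ (1/(n:ℝ)^2) * (u x)^2 := by
          intro s hs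
          have hd := η_diff s hs x
          have h2 : (η (x+s) - η x)^2 ≤ (1/(n:ℝ))^2 := by
            rw [← sq_abs]
            exact pow_le_pow_left₀ (abs_nonneg _) hd 2
          have h3 : (1/(n:ℝ))^2 = 1/(n:ℝ)^2 := by rw [div_pow, one_pow]
          rw [← h3]
          exact mul_le_mul_of_nonneg_right h2 (sq_nonneg _)
        have hconst : (S.map fun (_ : G) => (1/(n:ℝ)^2) * (u x)^2).sum
            = (Multiset.card S) • ((1/(n:ℝ)^2) * (u x)^2) := by simp
        refine le_trans (Multiset.sum_map_le_sum_map _ _ hb) ?_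
        rw [hconst, nsmul_eq_mul]
        apply le_of_eq; ring
      · rw [if_neg hx]
        have hwx : ¬ (wdist S p x ≤ 2*n+1) := fun h => hx ((hBF _ x).2 h)
        have hz : ∀ s ∈ S, (η (x+s) - η x)^2 * (u x)^2 = 0 := by
          intro s hs
          have h1 : η x = 0 := η_zero x (by omega)
          have h2 : η (x+s) = 0 := by
            apply η_zero
            have := wdist_pred_le hsym hgen hs p x
            omega
          rw [h1, h2]; ring
        rw [Multiset.map_congr rfl hz]
        simp
    refine le_trans (Finset.sum_le_sum hpt) ?_
    rw [← Finset.sum_filter]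
    have hfil : T.filter (fun x => x ∈ BF (2*n+1)) = BF (2*n+1) := by
      apply Finset.ext
      intro x
      simp only [Finset.mem_filter]
      constructor
      · rintro ⟨_, h⟩; exact h
      · intro h; exact ⟨hmono (by omega) h, h⟩
    rw [hfil, Finset.mul_sum]
  -- lower bound: gradient sum
  have hgrad : ∑ x ∈ BF n, gradSq S u x ≤ P := by
    have heq : ∀ x ∈ BF n, gradSq S u x
        = (S.map fun s => (η (x+s))^2 * (u (x+s) - u x)^2).sum := by
      intro x hx
      unfold gradSq
      apply congrArg
      apply Multiset.map_congr rfl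
      intro s hs
      have h1 : wdist S p (x+s) ≤ n+1 := by
        have := wdist_succ_le hsym hgen hs p x
        have := (hBF n x).1 hx
        omega
      rw [η_one _ h1]
      ring
    rw [Finset.sum_congr rfl heq]
    apply Finset.sum_le_sum_of_subset_of_nonneg (hmono (by omega))
    intro x _ _
    apply Multiset.sum_nonneg
    intro a ha
    rcases Multiset.mem_map.1 ha with ⟨s, _, rfl⟩
    positivity
  calc ∑ x ∈ BF n, gradSq S u x ≤ P := hgrad
    _ ≤ 4 * R := hPle
    _ ≤ 4 * (((Multiset.card S : ℝ)/(n:ℝ)^2) * ∑ x ∈ BF (2*n+1), (u x)^2) := by linarith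
    _ = (4 * (Multiset.card S : ℝ) / (n:ℝ)^2) * ∑ x ∈ BF (2*n+1), (u x)^2 := by ring

end CaccMain
section Iteration
variable {G : Type} [AddCommGroup G]

lemma lap_dOp (S : Multiset G) (u : G → ℝ) (g : G) (x : G) :
    lap S (dOp g u) x = lap S u (x + g) - lap S u x := by
  unfold lap dOp
  rw [← Multiset.sum_map_sub]
  apply congrArg
  apply Multiset.map_congr rfl
  intro s _
  have e1 : x + s + g = x + g + s := by abel
  rw [e1]
  ring

lemma harmonic_dOp {S : Multiset G} {u : G → ℝ} (hu : ∀ x, lap S u x = 0) (g : G) :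
    ∀ x, lap S (dOp g u) x = 0 := by
  intro x; rw [lap_dOp, hu, hu, sub_zero]

lemma harmonic_dList {S : Multiset G} {u : G → ℝ} (hu : ∀ x, lap S u x = 0) (ℓ : List G) :
    ∀ x, lap S (dList ℓ u) x = 0 := by
  induction ℓ with
  | nil => exact hu
  | cons a ℓ ih => exact harmonic_dOp ih a

lemma rpow_base_ge_one (n : ℕ) : (1:ℝ) ≤ (n:ℝ) + 1 := by
  have : (0:ℝ) ≤ (n:ℝ) := Nat.cast_nonneg n
  linarith

lemma step_bound (S : Multiset G) (p : G)
    (hsym : S.map (fun s => -s) = S)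
    (hgen : AddSubgroup.closure {s : G | s ∈ S} = ⊤)
    (BF : ℕ → Finset G) (hBF : ∀ n x, x ∈ BF n ↔ wdist S p x ≤ n)
    (u : G → ℝ) (hu : ∀ x, lap S u x = 0)
    (A e : ℝ) (hA : 0 ≤ A)
    (hbase : ∀ n : ℕ, 1 ≤ n → ∑ x ∈ BF n, (u x)^2 ≤ A * ((n:ℝ)+1)^e)
    {s : G} (hs : s ∈ S) (n : ℕ) (hn : 1 ≤ n) :
    ∑ x ∈ BF n, (dOp s u x)^2
      ≤ (16*(Multiset.card S : ℝ)*(2:ℝ)^e*A) * ((n:ℝ)+1)^(e-2) := by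
  have hnR : (0:ℝ) < n := by exact_mod_cast hn
  have hn1R : (1:ℝ) ≤ n := by exact_mod_cast hn
  have h1 : ∑ x ∈ BF n, (dOp s u x)^2 ≤ ∑ x ∈ BF n, gradSq S u x := by
    apply Finset.sum_le_sum
    intro x _
    apply Multiset.single_le_sum
    · intro a ha
      rcases Multiset.mem_map.1 ha with ⟨t, _, rfl⟩
      positivity
    · exact Multiset.mem_map_of_mem _ hs
  have h2 := cacc S p hsym hgen BF hBF u hu n hn
  have h3 : ∑ x ∈ BF (2*n+1), (u x)^2 ≤ A * (((2*n+1 : ℕ):ℝ)+1)^e :=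
    hbase (2*n+1) (by omega)
  have e1 : (((2*n+1 : ℕ):ℝ)+1) = 2*((n:ℝ)+1) := by push_cast; ring
  have e2 : (2*((n:ℝ)+1))^e = (2:ℝ)^e * ((n:ℝ)+1)^e := by
    apply Real.mul_rpow (by norm_num) (by positivity)
  have h4 : ∑ x ∈ BF (2*n+1), (u x)^2 ≤ A * ((2:ℝ)^e * ((n:ℝ)+1)^e) := by
    rw [← e2, ← e1]; exact h3
  have hS0 : (0:ℝ) ≤ (Multiset.card S : ℝ) := by positivity
  have h5 : ∑ x ∈ BF n, (dOp s u x)^2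
      ≤ (4*(Multiset.card S : ℝ)/(n:ℝ)^2) * (A * ((2:ℝ)^e * ((n:ℝ)+1)^e)) := by
    refine le_trans h1 (le_trans h2 ?_)
    apply mul_le_mul_of_nonneg_left h4
    positivity
  refine le_trans h5 ?_
  -- (4c/n²) * (A 2^e (n+1)^e) ≤ 16 c 2^e A (n+1)^(e-2)
  have hrw : ((n:ℝ)+1)^(e-2) = ((n:ℝ)+1)^e / ((n:ℝ)+1)^2 := by
    rw [Real.rpow_sub (by positivity)]
    norm_num [Real.rpow_two]
  rw [hrw]
  have hq : (1:ℝ)/(n:ℝ)^2 ≤ 4/((n:ℝ)+1)^2 := by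
    rw [div_le_div_iff₀ (by positivity) (by positivity)]
    nlinarith [hn1R]
  have hpos : (0:ℝ) ≤ (Multiset.card S : ℝ) * A * (2:ℝ)^e * ((n:ℝ)+1)^e := by
    have := Real.rpow_nonneg (le_of_lt (by positivity : (0:ℝ) < (2:ℝ))) e
    have := Real.rpow_nonneg (by positivity : (0:ℝ) ≤ (n:ℝ)+1) e
    positivity
  rw [div_le_div_iff₀ (by positivity) (by positivity)] at hq
  have expand : (4*(Multiset.card S : ℝ)/(n:ℝ)^2) * (A * ((2:ℝ)^e * ((n:ℝ)+1)^e))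
      = (4*(Multiset.card S : ℝ)* A * (2:ℝ)^e * ((n:ℝ)+1)^e) * ((1:ℝ)/(n:ℝ)^2) := by
    field_simp
  have expand2 : (16*(Multiset.card S : ℝ)*(2:ℝ)^e*A) * (((n:ℝ)+1)^e / ((n:ℝ)+1)^2)
      = (4*(Multiset.card S : ℝ)* A * (2:ℝ)^e * ((n:ℝ)+1)^e) * (4/((n:ℝ)+1)^2) := by
    field_simp
    ring
  rw [expand, expand2]
  apply mul_le_mul_of_nonneg_left _ (by positivity)
  rw [div_le_div_iff₀ (by positivity) (by positivity)]
  nlinarith [hn1R]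

lemma iter_bound (S : Multiset G) (p : G)
    (hsym : S.map (fun s => -s) = S)
    (hgen : AddSubgroup.closure {s : G | s ∈ S} = ⊤)
    (BF : ℕ → Finset G) (hBF : ∀ n x, x ∈ BF n ↔ wdist S p x ≤ n)
    (u : G → ℝ) (hu : ∀ x, lap S u x = 0)
    (A e : ℝ) (hA : 0 ≤ A)
    (hbase : ∀ n : ℕ, 1 ≤ n → ∑ x ∈ BF n, (u x)^2 ≤ A * ((n:ℝ)+1)^e)
    (ℓ : List G) (hℓ : ∀ a ∈ ℓ, a ∈ S) :
    ∃ A' : ℝ, 0 ≤ A' ∧ ∀ n : ℕ, 1 ≤ n →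
      ∑ x ∈ BF n, (dList ℓ u x)^2 ≤ A' * ((n:ℝ)+1)^(e - 2*ℓ.length) := by
  induction ℓ with
  | nil =>
    refine ⟨A, hA, ?_⟩
    intro n hn
    simpa using hbase n hn
  | cons a ℓ ih =>
    obtain ⟨A', hA', hbd⟩ := ih (fun b hb => hℓ b (List.mem_cons_of_mem a hb))
    have ha : a ∈ S := hℓ a (List.mem_cons_self)
    refine ⟨16*(Multiset.card S : ℝ)*(2:ℝ)^(e - 2*ℓ.length)*A', ?_, ?_⟩
    · have : (0:ℝ) ≤ (2:ℝ)^(e - 2*ℓ.length) := Real.rpow_nonneg (by norm_num) _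
      positivity
    · intro n hn
      have hharm : ∀ x, lap S (dList ℓ u) x = 0 := harmonic_dList hu ℓ
      have := step_bound S p hsym hgen BF hBF (dList ℓ u) hharm A' (e - 2*ℓ.length)
        hA' hbd ha n hn
      simp only [dList_cons]
      refine le_trans this (le_of_eq ?_)
      congr 1
      have : e - 2*(ℓ.length : ℝ) - 2 = e - 2*((a :: ℓ).length : ℝ) := by
        simp [List.length_cons]; push_cast; ring
      rw [this]

lemma Kset_of_growth (S : Multiset G) (p : G)
    (hsym : S.map (fun s => -s) = S)
    (hgen : AddSubgroup.closure {s : G | s ∈ S} = ⊤)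
    (BF : ℕ → Finset G) (hBF : ∀ n x, x ∈ BF n ↔ wdist S p x ≤ n)
    (u : G → ℝ) (hu : ∀ x, lap S u x = 0)
    (A e : ℝ) (hA : 0 ≤ A)
    (hbase : ∀ n : ℕ, 1 ≤ n → ∑ x ∈ BF n, (u x)^2 ≤ A * ((n:ℝ)+1)^e)
    (k : ℕ) (hk : e - 2*(k:ℝ) ≤ -1) : Kset S k u := by
  intro ℓ hℓ hlen
  funext x
  obtain ⟨A', hA', hbd⟩ := iter_bound S p hsym hgen BF hBF u hu A e hA hbase ℓ hℓ
  rw [hlen] at hbd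
  have hptbd : ∀ n : ℕ, 1 ≤ n → wdist S p x ≤ n → (dList ℓ u x)^2 ≤ A' * ((n:ℝ)+1)^(-1 : ℝ) := by
    intro n hn hxn
    have hmem : x ∈ BF n := (hBF n x).2 hxn
    have h1 : (dList ℓ u x)^2 ≤ ∑ y ∈ BF n, (dList ℓ u y)^2 := by
      apply Finset.single_le_sum (fun y _ => sq_nonneg _) hmem
    refine le_trans h1 (le_trans (hbd n hn) ?_)
    apply mul_le_mul_of_nonneg_left _ hA'
    exact Real.rpow_le_rpow_of_exponent_le (rpow_base_ge_one n) hk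
  have hz : (dList ℓ u x)^2 ≤ 0 := by
    by_contra hcon
    push_neg at hcon
    obtain ⟨N, hN⟩ := exists_nat_gt (A' / (dList ℓ u x)^2)
    set n : ℕ := max (max 1 (wdist S p x)) N with hndef
    have hn1 : 1 ≤ n := le_trans (le_max_left 1 _) (le_max_left _ _)
    have hnx : wdist S p x ≤ n := le_trans (le_max_right 1 _) (le_max_left _ _)
    have hnN : N ≤ n := le_max_right _ _
    have hb := hptbd n hn1 hnx
    have hrw : ((n:ℝ)+1)^(-1 : ℝ) = 1/((n:ℝ)+1) := by
      rw [Real.rpow_neg_one]; ring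
    rw [hrw] at hb
    have hlt : A' * (1/((n:ℝ)+1)) < (dList ℓ u x)^2 := by
      rw [div_lt_iff₀ (by positivity)] at hN
      have hNn : (N:ℝ) ≤ (n:ℝ) := by exact_mod_cast hnN
      have h2 : A' < (dList ℓ u x)^2 * ((n:ℝ)+1) := by nlinarith
      rw [mul_one_div, div_lt_iff₀ (by positivity)]
      linarith
    linarith
  have := sq_nonneg (dList ℓ u x)
  have : (dList ℓ u x)^2 = 0 := le_antisymm hz this
  have := pow_eq_zero_iff (n := 2) (by norm_num) |>.1 this
  simpa using this

end Iteration
section BallFinite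
variable {G : Type} [AddCommGroup G]

lemma ball_finite (S : Multiset G) (p : G)
    (hsym : S.map (fun s => -s) = S)
    (hgen : AddSubgroup.closure {s : G | s ∈ S} = ⊤) (n : ℕ) :
    {x : G | wdist S p x ≤ n}.Finite := by
  classical
  haveI : Fintype {s : G // s ∈ S} :=
    Fintype.subtype S.toFinset (by intro x; simp [Multiset.mem_toFinset])
  let F : (Σ k : Fin (n+1), (Fin (k:ℕ) → {s : G // s ∈ S})) → G :=
    fun t => p + ∑ i, ((t.2 i : G))
  apply Set.Finite.subset (Set.finite_range F)
  intro x hx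
  obtain ⟨L, hL, hlen, hsum⟩ := exists_list_wdist hsym hgen p x
  have hkle : L.length < n+1 := by
    have h1 : wdist S p x ≤ n := hx
    omega
  refine ⟨⟨⟨L.length, hkle⟩, fun i => ⟨L.get i, hL _ (List.get_mem L i)⟩⟩, ?_⟩
  show p + ∑ i, (L.get i) = x
  have : ∑ i, L.get i = (List.ofFn L.get).sum := List.sum_ofFn.symm
  rw [this, List.ofFn_get]
  exact hsum

end BallFinite

section Volume

lemma list_sum_comp1 {m l : ℕ} {q : Fin l → ℕ} (L : List (AbG m l q)) (j : Fin m) :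
    (L.sum).1 j = (L.map (fun a => a.1 j)).sum := by
  induction L with
  | nil => simp
  | cons a L ih => simp [ih]

lemma list_sum_abs_bound (M : ℤ) (L : List ℤ) (h : ∀ a ∈ L, |a| ≤ M) :
    |L.sum| ≤ L.length * M := by
  induction L with
  | nil => simp
  | cons a L ih =>
    have h1 : |a| ≤ M := h a (List.mem_cons_self)
    have h2 : |L.sum| ≤ L.length * M := ih (fun b hb => h b (List.mem_cons_of_mem a hb))
    have h3 : |a + L.sum| ≤ |a| + |L.sum| := abs_add_le _ _
    simp only [List.sum_cons, List.length_cons]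
    push_cast
    linarith

lemma volume_bound (m l : ℕ) (q : Fin l → ℕ) (hq : ∀ i, IsPrimePow (q i))
    (S : Multiset (AbG m l q)) (p : AbG m l q)
    (hsym : S.map (fun s => -s) = S)
    (hgen : AddSubgroup.closure {s : AbG m l q | s ∈ S} = ⊤)
    (BF : ℕ → Finset (AbG m l q)) (hBF : ∀ n x, x ∈ BF n ↔ wdist S p x ≤ n) :
    ∃ V : ℝ, 0 < V ∧ ∀ n : ℕ, ((BF n).card : ℝ) ≤ V * ((n:ℝ)+1)^(m:ℕ) := by
  classical
  haveI : ∀ i, NeZero (q i) := fun i => ⟨(hq i).pos.ne'⟩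
  haveI : Fintype (∀ i : Fin l, ZMod (q i)) := inferInstance
  -- bound on generators
  set M : ℤ := (S.map (fun s => ∑ j, |s.1 j|)).sum with hMdef
  have hM0 : 0 ≤ M := by
    apply Multiset.sum_nonneg
    intro a ha
    rcases Multiset.mem_map.1 ha with ⟨s, _, rfl⟩
    positivity
  have hM : ∀ s ∈ S, ∀ j : Fin m, |s.1 j| ≤ M := by
    intro s hs j
    have h1 : |s.1 j| ≤ ∑ j', |s.1 j'| :=
      Finset.single_le_sum (f := fun j' => |s.1 j'|) (fun j' _ => abs_nonneg _)
        (Finset.mem_univ j)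
    refine le_trans h1 ?_
    apply Multiset.single_le_sum
    · intro a ha
      rcases Multiset.mem_map.1 ha with ⟨t, _, rfl⟩
      positivity
    · exact Multiset.mem_map_of_mem _ hs
  have hbox : ∀ n : ℕ, ∀ x : AbG m l q, x ∈ BF n → ∀ j : Fin m,
      p.1 j - n*M ≤ x.1 j ∧ x.1 j ≤ p.1 j + n*M := by
    intro n x hx j
    obtain ⟨L, hL, hlen, hsum⟩ := exists_list_wdist hsym hgen p x
    have hwn : L.length ≤ n := by
      rw [hlen]; exact (hBF n x).1 hx
    have hcomp : x.1 j - p.1 j = (L.map (fun a => a.1 j)).sum := by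
      rw [← hsum]
      simp [list_sum_comp1]
    have habs : |x.1 j - p.1 j| ≤ L.length * M := by
      have hb := list_sum_abs_bound M (L.map (fun a => a.1 j)) (by
        intro a ha
        rcases List.mem_map.1 ha with ⟨b, hb, rfl⟩
        exact hM b (hL b hb) j)
      rw [hcomp]
      simpa [List.length_map] using hb
    have hnM : (L.length : ℤ) * M ≤ n * M := by
      apply mul_le_mul_of_nonneg_right _ hM0
      exact_mod_cast hwn
    rw [abs_le] at habs
    constructor <;> linarith [habs.1, habs.2]
  -- the box
  refine ⟨((2*(M:ℝ)+1)^(m:ℕ)) * (Fintype.card (∀ i : Fin l, ZMod (q i)) : ℝ), ?_, ?_⟩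
  · have h2 : (0:ℝ) < 2*(M:ℝ)+1 := by
      have : (0:ℝ) ≤ (M:ℝ) := by exact_mod_cast hM0
      linarith
    have h3 : 0 < Fintype.card (∀ i : Fin l, ZMod (q i)) := Fintype.card_pos
    positivity
  · intro n
    set box : Finset (Fin m → ℤ) :=
      Finset.Icc (fun j => p.1 j - n*M) (fun j => p.1 j + n*M) with hbox'
    have hsub : BF n ⊆ box ×ˢ (Finset.univ : Finset (∀ i : Fin l, ZMod (q i))) := by
      intro x hx
      rw [Finset.mem_product]
      refine ⟨?_, Finset.mem_univ _⟩
      rw [hbox', Finset.mem_Icc]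
      constructor
      · exact Pi.le_def.2 (fun j => (hbox n x hx j).1)
      · exact Pi.le_def.2 (fun j => (hbox n x hx j).2)
    have hcard : (BF n).card ≤ box.card * Fintype.card (∀ i : Fin l, ZMod (q i)) := by
      have h := Finset.card_le_card hsub
      rwa [Finset.card_product, Finset.card_univ] at h
    have hboxcard : box.card = ((2*(n:ℤ)*M+1).toNat)^m := by
      rw [hbox', Pi.card_Icc]
      have heach : ∀ j : Fin m, (Finset.Icc (p.1 j - n*M) (p.1 j + n*M)).card
          = (2*(n:ℤ)*M+1).toNat := by
        intro j; rw [Int.card_Icc]; congr 1; ring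
      rw [Finset.prod_congr rfl (fun j _ => heach j), Finset.prod_const, Finset.card_univ,
        Fintype.card_fin]
    have h0 : (0:ℤ) ≤ 2*(n:ℤ)*M+1 := by positivity
    have hMR : (0:ℝ) ≤ (M:ℝ) := by exact_mod_cast hM0
    have hnat : (((2*(n:ℤ)*M+1).toNat : ℕ) : ℝ) ≤ (2*(M:ℝ)+1) * ((n:ℝ)+1) := by
      have h2 : (((2*(n:ℤ)*M+1).toNat : ℕ) : ℤ) = 2*(n:ℤ)*M+1 := Int.toNat_of_nonneg h0
      have h3 := congrArg (fun z : ℤ => (z : ℝ)) h2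
      push_cast at h3
      rw [h3]
      have hn0 : (0:ℝ) ≤ (n:ℝ) := Nat.cast_nonneg n
      nlinarith
    have hpow : ((box.card : ℕ) : ℝ) ≤ ((2*(M:ℝ)+1) * ((n:ℝ)+1))^(m:ℕ) := by
      rw [hboxcard]
      push_cast
      apply pow_le_pow_left₀ (by positivity)
      exact_mod_cast hnat
    have hfin : ((BF n).card : ℝ)
        ≤ ((2*(M:ℝ)+1) * ((n:ℝ)+1))^(m:ℕ) * (Fintype.card (∀ i : Fin l, ZMod (q i)) : ℝ) := by
      have h1 : ((BF n).card : ℝ)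
          ≤ ((box.card : ℕ) : ℝ) * (Fintype.card (∀ i : Fin l, ZMod (q i)) : ℝ) := by
        exact_mod_cast hcard
      refine le_trans h1 ?_
      apply mul_le_mul_of_nonneg_right hpow (by positivity)
    refine le_trans hfin (le_of_eq ?_)
    rw [mul_pow]
    ring
end Volume
section NewtonMV

lemma dOp_comm {G : Type} [AddCommGroup G] (a b : G) (f : G → ℝ) :
    dOp a (dOp b f) = dOp b (dOp a f) := by
  funext x
  simp only [dOp]
  rw [add_right_comm x b a]
  ring

lemma dOp_iterate_comm {G : Type} [AddCommGroup G] (a b : G) (k : ℕ) (f : G → ℝ) :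
    (dOp a)^[k] (dOp b f) = dOp b ((dOp a)^[k] f) := by
  induction k with
  | zero => rfl
  | succ k ih =>
    rw [Function.iterate_succ_apply', ih, dOp_comm, Function.iterate_succ_apply']

lemma dOp_iterate_iterate_comm {G : Type} [AddCommGroup G] (a b : G) (k i : ℕ) (f : G → ℝ) :
    (dOp a)^[k] ((dOp b)^[i] f) = (dOp b)^[i] ((dOp a)^[k] f) := by
  induction i with
  | zero => rfl
  | succ i ih =>
    rw [Function.iterate_succ_apply', dOp_iterate_comm, ih,
      Function.iterate_succ_apply']

def zsnoc {m : ℕ} (a : Fin m → ℤ) (b : ℤ) : Fin (m+1) → ℤ := Fin.snoc a b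

@[simp] lemma zsnoc_last {m : ℕ} (a : Fin m → ℤ) (b : ℤ) : zsnoc a b (Fin.last m) = b :=
  Fin.snoc_last _ _

@[simp] lemma zsnoc_castSucc {m : ℕ} (a : Fin m → ℤ) (b : ℤ) (j : Fin m) :
    zsnoc a b (Fin.castSucc j) = a j := Fin.snoc_castSucc _ _ _

lemma snoc_add (m : ℕ) (a c : Fin m → ℤ) (b d : ℤ) :
    zsnoc a b + zsnoc c d = zsnoc (a + c) (b + d) := by
  funext i
  induction i using Fin.lastCases with
  | last => simp
  | cast j => simp

lemma single_last_eq (m : ℕ) :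
    (Pi.single (Fin.last m) (1:ℤ) : Fin (m+1) → ℤ) = zsnoc (0 : Fin m → ℤ) 1 := by
  funext i
  induction i using Fin.lastCases with
  | last => simp
  | cast j =>
    rw [zsnoc_castSucc]
    rw [Pi.single_apply]
    simp [Fin.ne_of_lt (Fin.castSucc_lt_last j)]

lemma single_castSucc_eq (m : ℕ) (j : Fin m) :
    (Pi.single (Fin.castSucc j) (1:ℤ) : Fin (m+1) → ℤ)
      = zsnoc (Pi.single j (1:ℤ)) 0 := by
  funext i
  induction i using Fin.lastCases with
  | last =>
    rw [zsnoc_last, Pi.single_apply]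
    simp [(Fin.ne_of_lt (Fin.castSucc_lt_last j)).symm]
  | cast i =>
    rw [zsnoc_castSucc, Pi.single_apply, Pi.single_apply]
    simp [Fin.castSucc_inj]

lemma newtonMV : ∀ (m : ℕ) (k : ℕ) (U : (Fin m → ℤ) → ℝ),
    (∀ j : Fin m, (dOp (Pi.single j 1 : Fin m → ℤ))^[k] U = 0) →
    ∃ P : MvPolynomial (Fin m) ℝ,
      ∀ x : Fin m → ℤ, U x = MvPolynomial.eval (fun i => (x i : ℝ)) P := by
  intro m
  induction m with
  | zero =>
    intro k U _
    refine ⟨MvPolynomial.C (U 0), ?_⟩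
    intro x
    have hx : x = 0 := funext fun i => i.elim0
    rw [hx, MvPolynomial.eval_C]
  | succ m ih =>
    intro k U hU
    set glast : Fin (m+1) → ℤ := Pi.single (Fin.last m) 1 with hglast
    -- the 1d slices
    have hslice : ∀ (x' : Fin m → ℤ) (i : ℕ) (t : ℤ),
        (dOp (1:ℤ))^[i] (fun t' : ℤ => U (zsnoc x' t')) t
          = ((dOp glast)^[i] U) (zsnoc x' t) := by
      intro x' i
      induction i with
      | zero => intro t; rfl
      | succ i ih2 =>
        intro t
        rw [Function.iterate_succ_apply', Function.iterate_succ_apply']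
        show (dOp (1:ℤ))^[i] _ (t+1) - (dOp (1:ℤ))^[i] _ t = _
        rw [ih2 (t+1), ih2 t]
        have e1 : zsnoc x' (t+1) = zsnoc x' t + glast := by
          rw [hglast, single_last_eq, snoc_add]
          simp
        rw [e1]
        rfl
    have hslice0 : ∀ (x' : Fin m → ℤ), (dOp (1:ℤ))^[k] (fun t' : ℤ => U (zsnoc x' t')) = 0 := by
      intro x'
      funext t
      rw [hslice x' k t, hU (Fin.last m)]
      rfl
    -- newton expansion in last variable
    have hexp : ∀ (x' : Fin m → ℤ) (t : ℤ),
        U (zsnoc x' t) = ∑ i ∈ Finset.range k,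
          ((dOp glast)^[i] U) (zsnoc x' 0) * bin i (t:ℝ) := by
      intro x' t
      have := newton1d k (fun t' : ℤ => U (zsnoc x' t')) (hslice0 x') t
      rw [this]
      apply Finset.sum_congr rfl
      intro i _
      rw [hslice x' i 0]
    -- coefficient functions
    set W : ℕ → (Fin m → ℤ) → ℝ := fun i x' => ((dOp glast)^[i] U) (zsnoc x' 0) with hW
    have hWvanish : ∀ i : ℕ, ∀ j : Fin m, (dOp (Pi.single j 1 : Fin m → ℤ))^[k] (W i) = 0 := by
      intro i j
      have hcomm : (dOp (Pi.single (Fin.castSucc j) 1 : Fin (m+1) → ℤ))^[k]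
          ((dOp glast)^[i] U) = 0 := by
        rw [dOp_iterate_iterate_comm, hU (Fin.castSucc j)]
        clear_value glast
        induction i with
        | zero => rfl
        | succ i ih3 => rw [Function.iterate_succ_apply', ih3, dOp_zero_fun]
      -- transfer to the m-variable function
      have htrans : ∀ (r : ℕ) (x' : Fin m → ℤ),
          (dOp (Pi.single j 1 : Fin m → ℤ))^[r] (W i) x'
            = ((dOp (Pi.single (Fin.castSucc j) 1 : Fin (m+1) → ℤ))^[r]
                ((dOp glast)^[i] U)) (zsnoc x' 0) := by
        intro r
        induction r with
        | zero => intro x'; rfl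
        | succ r ih4 =>
          intro x'
          rw [Function.iterate_succ_apply', Function.iterate_succ_apply']
          show (dOp (Pi.single j 1 : Fin m → ℤ))^[r] (W i) (x' + Pi.single j 1)
              - (dOp (Pi.single j 1 : Fin m → ℤ))^[r] (W i) x' = _
          rw [ih4 (x' + Pi.single j 1), ih4 x']
          have e1 : zsnoc (x' + Pi.single j 1) (0:ℤ)
              = zsnoc x' 0 + Pi.single (Fin.castSucc j) 1 := by
            rw [single_castSucc_eq, snoc_add]
            simp
          rw [e1]
          rfl
      funext x'
      rw [htrans k x', hcomm]
      rfl
    -- apply induction hypothesis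
    have hPi : ∀ i : ℕ, ∃ P : MvPolynomial (Fin m) ℝ,
        ∀ x : Fin m → ℤ, W i x = MvPolynomial.eval (fun r => (x r : ℝ)) P :=
      fun i => ih k (W i) (hWvanish i)
    choose Ps hPs using hPi
    refine ⟨∑ i ∈ Finset.range k, (MvPolynomial.rename Fin.castSucc (Ps i))
      * (MvPolynomial.C (1/(i.factorial : ℝ))
          * ∏ t ∈ Finset.range i, (MvPolynomial.X (Fin.last m) - MvPolynomial.C (t:ℝ))), ?_⟩
    intro y
    have hy : U y = U (zsnoc (Fin.init y) (y (Fin.last m))) := by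
      have : zsnoc (Fin.init y) (y (Fin.last m)) = y := Fin.snoc_init_self y
      rw [this]
    rw [hy, hexp (Fin.init y) (y (Fin.last m))]
    rw [map_sum]
    apply Finset.sum_congr rfl
    intro i _
    rw [map_mul, MvPolynomial.eval_rename]
    have hinit : ((fun r => (y r : ℝ)) ∘ Fin.castSucc) = fun r => ((Fin.init y) r : ℝ) := by
      funext r
      rfl
    rw [hinit, ← hPs i (Fin.init y)]
    congr 1
    -- evaluation of the binomial polynomial
    unfold bin
    have hev : ∀ t ∈ Finset.range i, (MvPolynomial.eval (fun r => (y r : ℝ)))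
        (MvPolynomial.X (Fin.last m) - MvPolynomial.C (t:ℝ))
          = ((y (Fin.last m) : ℝ) - (t:ℝ)) := by
      intro t _
      rw [map_sub, MvPolynomial.eval_X, MvPolynomial.eval_C]
    rw [map_mul, MvPolynomial.eval_C, map_prod, Finset.prod_congr rfl hev]
    ring

end NewtonMV
section Assembly

lemma list_sum_fst {m l : ℕ} {q : Fin l → ℕ} (L : List (AbG m l q)) :
    (L.sum).1 = (L.map Prod.fst).sum := by
  induction L with
  | nil => rfl
  | cons a L ih => simp [ih]

lemma list_sum_snd {m l : ℕ} {q : Fin l → ℕ} (L : List (AbG m l q)) :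
    (L.sum).2 = (L.map Prod.snd).sum := by
  induction L with
  | nil => rfl
  | cons a L ih => simp [ih]

lemma lift_list {m l : ℕ} {q : Fin l → ℕ} (S : Multiset (AbG m l q)) :
    ∀ L₁ : List (Fin m → ℤ), (∀ a ∈ L₁, a ∈ S.map Prod.fst) →
      ∃ L : List (AbG m l q), (∀ s ∈ L, s ∈ S) ∧ L.map Prod.fst = L₁ := by
  intro L₁
  induction L₁ with
  | nil => intro _; exact ⟨[], by simp, rfl⟩
  | cons a L₁ ih =>
    intro h
    obtain ⟨L, hL, hLmap⟩ := ih (fun b hb => h b (List.mem_cons_of_mem a hb))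
    have ha : a ∈ S.map Prod.fst := h a (List.mem_cons_self)
    obtain ⟨s, hs, hsa⟩ := Multiset.mem_map.1 ha
    refine ⟨s :: L, ?_, by simp [hLmap, hsa]⟩
    intro t ht
    rcases List.mem_cons.1 ht with h' | h'
    · rw [h']; exact hs
    · exact hL t h'

theorem generalized_heilbronn' (m l : ℕ) (q : Fin l → ℕ) (hq : ∀ i, IsPrimePow (q i))
    (S : Multiset (AbG m l q))
    (hsym : S.map (fun s => -s) = S)
    (hgen : AddSubgroup.closure {s : AbG m l q | s ∈ S} = ⊤)
    (p : AbG m l q) (d : ℝ) (hd : 0 ≤ d) :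
    (∀ f ∈ HdSet S p d, ∀ (x : AbG m l q) (w : ∀ i : Fin l, ZMod (q i)),
        f (x + ((0 : Fin m → ℤ), w)) = f x) ∧
    (∀ f ∈ HdSet S p d, ∃ P : MvPolynomial (Fin m) ℝ,
        ∀ x₁ : Fin m → ℤ, f (x₁, 0) = MvPolynomial.eval (fun i => (x₁ i : ℝ)) P) ∧
    Set.BijOn (fun (f : AbG m l q → ℝ) => (fun x₁ : Fin m → ℤ => f (x₁, 0)))
      (HdSet S p d) (HdSet (S.map Prod.fst) p.1 d) := by
  classical
  haveI : ∀ i, NeZero (q i) := fun i => ⟨(hq i).pos.ne'⟩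
  have hfin : ∀ n : ℕ, {x : AbG m l q | wdist S p x ≤ n}.Finite :=
    ball_finite S p hsym hgen
  set BF : ℕ → Finset (AbG m l q) := fun n => (hfin n).toFinset with hBFdef
  have hBF : ∀ n x, x ∈ BF n ↔ wdist S p x ≤ n := by
    intro n x
    simp [hBFdef, Set.Finite.mem_toFinset]
  obtain ⟨V, hV0, hVbd⟩ := volume_bound m l q hq S p hsym hgen BF hBF
  set k : ℕ := m + ⌈d⌉₊ + 1 with hkdef
  have hkexp : ((m:ℝ) + 2*d) - 2*(k:ℝ) ≤ -1 := by
    have h1 : d ≤ (⌈d⌉₊ : ℝ) := Nat.le_ceil d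
    have h2 : (k:ℝ) = (m:ℝ) + (⌈d⌉₊ : ℝ) + 1 := by rw [hkdef]; push_cast; ring
    have h3 : (0:ℝ) ≤ (m:ℝ) := Nat.cast_nonneg m
    linarith
  -- master lemma
  have master : ∀ f ∈ HdSet S p d, Kset S k f := by
    intro f hf
    obtain ⟨hharm, C, hgrow⟩ := hf
    have hC0 : 0 ≤ C := by
      have h1 := hgrow p
      rw [wdist_self] at h1
      norm_num [Real.one_rpow] at h1
      exact le_trans (abs_nonneg _) h1
    have hbase : ∀ n : ℕ, 1 ≤ n →
        ∑ x ∈ BF n, (f x)^2 ≤ (V*C^2) * ((n:ℝ)+1)^((m:ℝ) + 2*d) := by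
      intro n hn
      have hpt : ∀ x ∈ BF n, (f x)^2 ≤ C^2 * (((n:ℝ)+1)^d)^2 := by
        intro x hx
        have h1 : |f x| ≤ C * ((wdist S p x : ℝ) + 1)^d := hgrow x
        have h2 : ((wdist S p x : ℝ) + 1)^d ≤ ((n:ℝ)+1)^d := by
          apply Real.rpow_le_rpow (by positivity) _ hd
          have := (hBF n x).1 hx
          have : ((wdist S p x : ℕ) : ℝ) ≤ (n : ℝ) := by exact_mod_cast this
          linarith
        have h3 : |f x| ≤ C * ((n:ℝ)+1)^d := le_trans h1 (by
          apply mul_le_mul_of_nonneg_left h2 hC0)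
        have h4 : (f x)^2 = |f x|^2 := (sq_abs _).symm
        rw [h4]
        have h5 : |f x|^2 ≤ (C * ((n:ℝ)+1)^d)^2 := by
          apply pow_le_pow_left₀ (abs_nonneg _) h3
        calc |f x|^2 ≤ (C * ((n:ℝ)+1)^d)^2 := h5
          _ = C^2 * (((n:ℝ)+1)^d)^2 := by ring
      have hsum : ∑ x ∈ BF n, (f x)^2 ≤ (BF n).card • (C^2 * (((n:ℝ)+1)^d)^2) :=
        Finset.sum_le_card_nsmul _ _ _ hpt
      have hcard := hVbd n
      have hrpos : (0:ℝ) ≤ C^2 * (((n:ℝ)+1)^d)^2 := by positivity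
      have h6 : ((BF n).card : ℝ) * (C^2 * (((n:ℝ)+1)^d)^2)
          ≤ (V * ((n:ℝ)+1)^(m:ℕ)) * (C^2 * (((n:ℝ)+1)^d)^2) :=
        mul_le_mul_of_nonneg_right hcard hrpos
      have h7 : (V * ((n:ℝ)+1)^(m:ℕ)) * (C^2 * (((n:ℝ)+1)^d)^2)
          = (V*C^2) * (((n:ℝ)+1)^(m:ℕ) * (((n:ℝ)+1)^d)^2) := by ring
      have h8 : ((n:ℝ)+1)^(m:ℕ) * (((n:ℝ)+1)^d)^2 = ((n:ℝ)+1)^((m:ℝ) + 2*d) := by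
        have hb : (0:ℝ) < (n:ℝ)+1 := by positivity
        rw [← Real.rpow_natCast ((n:ℝ)+1) m]
        have : (((n:ℝ)+1)^d)^2 = ((n:ℝ)+1)^(2*d) := by
          rw [sq, ← Real.rpow_add hb, two_mul]
        rw [this, ← Real.rpow_add hb]
      rw [nsmul_eq_mul] at hsum
      calc ∑ x ∈ BF n, (f x)^2 ≤ ((BF n).card : ℝ) * (C^2 * (((n:ℝ)+1)^d)^2) := hsum
        _ ≤ (V * ((n:ℝ)+1)^(m:ℕ)) * (C^2 * (((n:ℝ)+1)^d)^2) := h6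
        _ = (V*C^2) * (((n:ℝ)+1)^(m:ℕ) * (((n:ℝ)+1)^d)^2) := h7
        _ = (V*C^2) * ((n:ℝ)+1)^((m:ℝ) + 2*d) := by rw [h8]
    exact Kset_of_growth S p hsym hgen BF hBF f hharm (V*C^2) ((m:ℝ)+2*d)
      (by positivity) hbase k hkexp
  -- claim 1 : torsion invariance
  have claim1 : ∀ f ∈ HdSet S p d, ∀ (x : AbG m l q) (w : ∀ i : Fin l, ZMod (q i)),
      f (x + ((0 : Fin m → ℤ), w)) = f x := by
    intro f hf x w
    have hK := master f hf
    set g : AbG m l q := ((0 : Fin m → ℤ), w) with hg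
    have hit : (dOp g)^[k] f = 0 := dOp_iterate_zero_of_Kset hsym hgen hK g
    set N : ℕ := ∏ i, q i with hN
    have hN1 : 1 ≤ N := by
      rw [hN]
      exact Nat.one_le_iff_ne_zero.2 (Finset.prod_ne_zero_iff.2 (fun i _ => (hq i).pos.ne'))
    have hNg : N • g = 0 := by
      rw [hg]
      apply Prod.ext
      · simp
      · funext i
        show N • (w i) = 0
        have h1 : (N : ZMod (q i)) = 0 := by
          rw [ZMod.natCast_eq_zero_iff]
          exact Finset.dvd_prod_of_mem q (Finset.mem_univ i)
        rw [nsmul_eq_mul, h1, zero_mul]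
    set ψ : ℤ → ℝ := fun j => f (x + j • g) with hψ
    have hper : ∀ j : ℤ, ψ (j + N) = ψ j := by
      intro j
      simp only [hψ]
      congr 1
      rw [add_smul, ← add_assoc]
      have : ((N:ℤ) : ℤ) • g = N • g := natCast_zsmul g N
      rw [this, hNg, add_zero]
    have hsl : ∀ i : ℕ, ∀ j : ℤ, (dOp (1:ℤ))^[i] ψ j = ((dOp g)^[i] f) (x + j • g) := by
      intro i
      induction i with
      | zero => intro j; rfl
      | succ i ih =>
        intro j
        rw [Function.iterate_succ_apply', Function.iterate_succ_apply']
        show (dOp (1:ℤ))^[i] ψ (j+1) - (dOp (1:ℤ))^[i] ψ j = _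
        rw [ih (j+1), ih j]
        have e1 : x + (j+1) • g = (x + j • g) + g := by
          rw [add_smul, one_smul, ← add_assoc]
        rw [e1]
        rfl
    have hdiff : (dOp (1:ℤ))^[k] ψ = 0 := by
      funext j
      rw [hsl k j, hit]
      rfl
    have hstep := periodic_diff_const N hN1 k ψ hper hdiff 0
    have e0 : ψ 0 = f x := by simp [hψ]
    have e1 : ψ (0+1) = f (x + g) := by
      simp only [hψ, zero_add, one_smul]
    rw [e0, e1] at hstep
    exact hstep
  -- claim 2 : polynomial
  have claim2 : ∀ f ∈ HdSet S p d, ∃ P : MvPolynomial (Fin m) ℝ,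
      ∀ x₁ : Fin m → ℤ, f (x₁, 0) = MvPolynomial.eval (fun i => (x₁ i : ℝ)) P := by
    intro f hf
    have hK := master f hf
    set U : (Fin m → ℤ) → ℝ := fun z => f (z, 0) with hU
    have hvan : ∀ j : Fin m, (dOp (Pi.single j 1 : Fin m → ℤ))^[k] U = 0 := by
      intro j
      set gj : AbG m l q := ((Pi.single j 1 : Fin m → ℤ), 0) with hgj
      have hit : (dOp gj)^[k] f = 0 := dOp_iterate_zero_of_Kset hsym hgen hK gj
      have htr : ∀ i : ℕ, ∀ z : Fin m → ℤ,
          (dOp (Pi.single j 1 : Fin m → ℤ))^[i] U z = ((dOp gj)^[i] f) (z, 0) := by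
        intro i
        induction i with
        | zero => intro z; rfl
        | succ i ih =>
          intro z
          rw [Function.iterate_succ_apply', Function.iterate_succ_apply']
          show (dOp (Pi.single j 1 : Fin m → ℤ))^[i] U (z + Pi.single j 1)
              - (dOp (Pi.single j 1 : Fin m → ℤ))^[i] U z = _
          rw [ih (z + Pi.single j 1), ih z]
          have e1 : ((z + Pi.single j 1 : Fin m → ℤ), (0 : ∀ i : Fin l, ZMod (q i)))
              = (z, (0 : ∀ i : Fin l, ZMod (q i))) + gj := by
            rw [hgj]
            apply Prod.ext <;> simp
          rw [e1]
          rfl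
      funext z
      rw [htr k z, hit]
      rfl
    exact newtonMV m k U hvan
  refine ⟨claim1, claim2, ?_, ?_, ?_⟩
  · -- MapsTo
    intro f hf
    obtain ⟨hharm, C, hgrow⟩ := hf
    have hC0 : 0 ≤ C := by
      have h1 := hgrow p
      rw [wdist_self] at h1
      norm_num [Real.one_rpow] at h1
      exact le_trans (abs_nonneg _) h1
    constructor
    · -- harmonicity of the restriction
      intro x₁
      unfold lap
      rw [Multiset.map_map]
      simp only [Function.comp]
      have hcong : ∀ s ∈ S, f (x₁ + s.1, (0 : ∀ i : Fin l, ZMod (q i))) - f (x₁, 0)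
          = f ((x₁, (0 : ∀ i : Fin l, ZMod (q i))) + s) - f (x₁, 0) := by
        intro s hs
        congr 1
        have h1 := claim1 f ⟨hharm, C, hgrow⟩ ((x₁ + s.1, (0 : ∀ i : Fin l, ZMod (q i)))) s.2
        have e1 : (x₁ + s.1, (0 : ∀ i : Fin l, ZMod (q i))) + ((0 : Fin m → ℤ), s.2)
            = (x₁, (0 : ∀ i : Fin l, ZMod (q i))) + s := by
          apply Prod.ext <;> simp
        rw [e1] at h1
        exact h1.symm
      rw [Multiset.map_congr rfl hcong]
      exact hharm (x₁, 0)
    · -- growth of the restriction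
      set B : ℕ := Finset.univ.sup (fun v : ∀ i : Fin l, ZMod (q i) =>
        wdist S ((0 : Fin m → ℤ), v) ((0 : Fin m → ℤ), (0 : ∀ i : Fin l, ZMod (q i))))
        with hBdef
      refine ⟨C * ((B:ℝ)+1)^d, ?_⟩
      intro x₁
      have hsym₁ : (S.map Prod.fst).map (fun s => -s) = S.map Prod.fst := by
        rw [Multiset.map_map]
        have e1 : ((fun s : Fin m → ℤ => -s) ∘ Prod.fst)
            = (Prod.fst ∘ (fun s : AbG m l q => -s)) := rfl
        rw [e1, ← Multiset.map_map, hsym]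
      have hgen₁ : AddSubgroup.closure {s : Fin m → ℤ | s ∈ S.map Prod.fst} = ⊤ := by
        rw [eq_top_iff]
        intro z _
        obtain ⟨L, hL, hsum⟩ := reach_list hsym hgen ((z, 0) : AbG m l q)
        have hz : z = (L.map Prod.fst).sum := by
          rw [← list_sum_fst, hsum]
        rw [hz]
        apply AddSubgroup.list_sum_mem
        intro a ha
        rcases List.mem_map.1 ha with ⟨b, hb, rfl⟩
        apply AddSubgroup.subset_closure
        exact Multiset.mem_map_of_mem _ (hL b hb)
      obtain ⟨L₁, hL₁mem, hL₁len, hL₁sum⟩ := exists_list_wdist hsym₁ hgen₁ p.1 x₁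
      obtain ⟨L, hLmem, hLmap⟩ := lift_list S L₁ hL₁mem
      set v : ∀ i : Fin l, ZMod (q i) := p.2 + (L.sum).2 with hv
      have hword : p + L.sum = (x₁, v) := by
        apply Prod.ext
        · show p.1 + (L.sum).1 = x₁
          rw [list_sum_fst, hLmap, hL₁sum]
        · rfl
      have h1 : wdist S p (x₁, v) ≤ wdist (S.map Prod.fst) p.1 x₁ := by
        have := wdist_le_of_list S p (x₁, v) L hLmem hword
        have hlen2 : L.length = L₁.length := by
          rw [← hLmap, List.length_map]
        omega
      have h2 : wdist S (x₁, v) (x₁, (0 : ∀ i : Fin l, ZMod (q i))) ≤ B := by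
        have e1 : ((0 : Fin m → ℤ), v) + (x₁, (0 : ∀ i : Fin l, ZMod (q i)))
            = (x₁, v) := by
          apply Prod.ext <;> simp
        have e2 : ((0 : Fin m → ℤ), (0 : ∀ i : Fin l, ZMod (q i)))
            + (x₁, (0 : ∀ i : Fin l, ZMod (q i))) = (x₁, (0 : ∀ i : Fin l, ZMod (q i))) := by
          apply Prod.ext <;> simp
        have := wdist_add_right S ((0 : Fin m → ℤ), v)
          ((0 : Fin m → ℤ), (0 : ∀ i : Fin l, ZMod (q i))) (x₁, (0 : ∀ i : Fin l, ZMod (q i)))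
        rw [e1, e2] at this
        rw [this, hBdef]
        exact Finset.le_sup (f := fun v : ∀ i : Fin l, ZMod (q i) =>
          wdist S ((0 : Fin m → ℤ), v) ((0 : Fin m → ℤ), (0 : ∀ i : Fin l, ZMod (q i))))
          (Finset.mem_univ v)
      have h3 : wdist S p (x₁, (0 : ∀ i : Fin l, ZMod (q i)))
          ≤ wdist (S.map Prod.fst) p.1 x₁ + B := by
        have := wdist_triangle hsym hgen p (x₁, v) (x₁, (0 : ∀ i : Fin l, ZMod (q i)))
        omega
      have h4 : |f (x₁, (0 : ∀ i : Fin l, ZMod (q i)))|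
          ≤ C * ((wdist S p (x₁, (0 : ∀ i : Fin l, ZMod (q i))) : ℝ) + 1)^d := hgrow _
      refine le_trans h4 ?_
      have h5 : ((wdist S p (x₁, (0 : ∀ i : Fin l, ZMod (q i))) : ℝ) + 1)
          ≤ ((B:ℝ)+1) * ((wdist (S.map Prod.fst) p.1 x₁ : ℝ) + 1) := by
        have hc : ((wdist S p (x₁, (0 : ∀ i : Fin l, ZMod (q i))) : ℕ) : ℝ)
            ≤ (wdist (S.map Prod.fst) p.1 x₁ : ℝ) + (B : ℝ) := by
          exact_mod_cast h3
        have hw0 : (0:ℝ) ≤ (wdist (S.map Prod.fst) p.1 x₁ : ℝ) := Nat.cast_nonneg _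
        have hB0 : (0:ℝ) ≤ (B:ℝ) := Nat.cast_nonneg _
        nlinarith
      have h6 : ((wdist S p (x₁, (0 : ∀ i : Fin l, ZMod (q i))) : ℝ) + 1)^d
          ≤ (((B:ℝ)+1) * ((wdist (S.map Prod.fst) p.1 x₁ : ℝ) + 1))^d :=
        Real.rpow_le_rpow (by positivity) h5 hd
      have h7 : (((B:ℝ)+1) * ((wdist (S.map Prod.fst) p.1 x₁ : ℝ) + 1))^d
          = ((B:ℝ)+1)^d * ((wdist (S.map Prod.fst) p.1 x₁ : ℝ) + 1)^d :=
        Real.mul_rpow (by positivity) (by positivity)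
      calc C * ((wdist S p (x₁, (0 : ∀ i : Fin l, ZMod (q i))) : ℝ) + 1)^d
          ≤ C * (((B:ℝ)+1) * ((wdist (S.map Prod.fst) p.1 x₁ : ℝ) + 1))^d :=
            mul_le_mul_of_nonneg_left h6 hC0
        _ = C * ((B:ℝ)+1)^d * ((wdist (S.map Prod.fst) p.1 x₁ : ℝ) + 1)^d := by
            rw [h7]; ring
  · -- InjOn
    intro f hf g hg hres
    funext x
    have e : (x.1, (0 : ∀ i : Fin l, ZMod (q i))) + ((0 : Fin m → ℤ), x.2) = x := by
      apply Prod.ext <;> simp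
    have h1 : f x = f (x.1, (0 : ∀ i : Fin l, ZMod (q i))) := by
      have := claim1 f hf (x.1, (0 : ∀ i : Fin l, ZMod (q i))) x.2
      rw [e] at this
      exact this
    have h2 : g x = g (x.1, (0 : ∀ i : Fin l, ZMod (q i))) := by
      have := claim1 g hg (x.1, (0 : ∀ i : Fin l, ZMod (q i))) x.2
      rw [e] at this
      exact this
    rw [h1, h2]
    exact congrFun hres x.1
  · -- SurjOn
    intro g hg
    obtain ⟨hgh, C, hgb⟩ := hg
    have hC0 : 0 ≤ C := by
      have h1 := hgb p.1
      rw [wdist_self] at h1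
      norm_num [Real.one_rpow] at h1
      exact le_trans (abs_nonneg _) h1
    refine ⟨fun x => g x.1, ⟨?_, C, ?_⟩, ?_⟩
    · -- harmonic lift
      intro x
      have h0 := hgh x.1
      unfold lap at h0 ⊢
      rw [Multiset.map_map] at h0
      exact h0
    · -- growth of the lift
      intro x
      have hproj : wdist (S.map Prod.fst) p.1 x.1 ≤ wdist S p x := by
        obtain ⟨L, hL, hlen, hsum⟩ := exists_list_wdist hsym hgen p x
        have := wdist_le_of_list (S.map Prod.fst) p.1 x.1 (L.map Prod.fst)
          (by
            intro a ha
            rcases List.mem_map.1 ha with ⟨b, hb, rfl⟩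
            exact Multiset.mem_map_of_mem _ (hL b hb))
          (by rw [← list_sum_fst]
              exact congrArg Prod.fst hsum)
        rw [List.length_map, hlen] at this
        exact this
      have h1 := hgb x.1
      refine le_trans h1 ?_
      apply mul_le_mul_of_nonneg_left _ hC0
      apply Real.rpow_le_rpow (by positivity) _ hd
      have : ((wdist (S.map Prod.fst) p.1 x.1 : ℕ) : ℝ) ≤ ((wdist S p x : ℕ) : ℝ) := by
        exact_mod_cast hproj
      linarith
    · rfl

end Assembly

/-- **Generalized Heilbronn theorem** (Theorem 1.2). Every `f ∈ H^d(G,S)` is constant on the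
torsion part `G₂`, its restriction to `G₁ ≅ ℤ^m` is the restriction of a polynomial on `ℝ^m`,
and the restriction map is an identification `H^d(G,S) = H^d(G₁, π_{G₁}S)`. -/
theorem generalized_heilbronn (m l : ℕ) (q : Fin l → ℕ) (hq : ∀ i, IsPrimePow (q i))
    (S : Multiset (AbG m l q))
    (hsym : S.map (fun s => -s) = S)
    (hgen : AddSubgroup.closure {s : AbG m l q | s ∈ S} = ⊤)
    (p : AbG m l q) (d : ℝ) (hd : 0 ≤ d) :
    (∀ f ∈ HdSet S p d, ∀ (x : AbG m l q) (w : ∀ i : Fin l, ZMod (q i)),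
        f (x + ((0 : Fin m → ℤ), w)) = f x) ∧
    (∀ f ∈ HdSet S p d, ∃ P : MvPolynomial (Fin m) ℝ,
        ∀ x₁ : Fin m → ℤ, f (x₁, 0) = MvPolynomial.eval (fun i => (x₁ i : ℝ)) P) ∧
    Set.BijOn (fun (f : AbG m l q → ℝ) => (fun x₁ : Fin m → ℤ => f (x₁, 0)))
      (HdSet S p d) (HdSet (S.map Prod.fst) p.1 d) := by
  exact generalized_heilbronn' m l q hq S hsym hgen p d hd
end

section
/- Let (G,S) be the Cayley graph of a finitely generated abelian group G ≅ ℤ^m ⊕ ⊕_{i=1}^l ℤ_{q_i}. Then every nonnegative harmonic function f : G → ℝ is constant (Liouville theorem). -/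
open MvPolynomial

section Aux

variable {G : Type} [AddCommGroup G] (S : Multiset G)

/-- Sum form of harmonicity. -/
lemma sum_eq_of_lap_eq_zero {h : G → ℝ} {x : G} (hx : lap S h x = 0) :
    (S.map fun s => h (x + s)).sum = (Multiset.card S : ℝ) * h x := by
  have h1 : (S.map fun s => h (x + s) - h x).sum
      = (S.map fun s => h (x + s)).sum - (S.map fun _ => h x).sum :=
    Multiset.sum_map_sub
  have h2 : (S.map fun _ => h x).sum = (Multiset.card S : ℝ) * h x := by
    rw [Multiset.map_const', Multiset.sum_replicate, nsmul_eq_mul]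
  have h3 : (S.map fun s => h (x + s) - h x).sum = 0 := hx
  rw [h1, h2] at h3
  linarith

/-- Linearity of the Laplacian, in the form needed below. -/
lemma lap_smul_sub (c : ℝ) (h k : G → ℝ) (x : G) :
    lap S (fun y => c * h y - k y) x = c * lap S h x - lap S k x := by
  show (S.map fun s => (c * h (x + s) - k (x + s)) - (c * h x - k x)).sum
    = c * (S.map fun s => h (x + s) - h x).sum - (S.map fun s => k (x + s) - k x).sum
  rw [← Multiset.sum_map_mul_left, ← Multiset.sum_map_sub]
  apply congrArg
  apply Multiset.map_congr rfl
  intro s _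
  ring

/-- The Laplacian commutes with translations. -/
lemma lap_translate (h : G → ℝ) (u x : G) :
    lap S (fun y => h (y + u)) x = lap S h (x + u) := by
  show (S.map fun s => h ((x + s) + u) - h (x + u)).sum
    = (S.map fun s => h ((x + u) + s) - h (x + u)).sum
  apply congrArg
  apply Multiset.map_congr rfl
  intro s _
  rw [add_right_comm]

/-- Single-step Harnack inequality for nonnegative harmonic functions. -/
lemma harnack_step {h : G → ℝ} (hharm : ∀ x, lap S h x = 0) (hpos : ∀ x, 0 ≤ h x)
    {a : G} (ha : a ∈ S) (x : G) : h (x + a) ≤ (Multiset.card S : ℝ) * h x := by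
  rw [← sum_eq_of_lap_eq_zero S (hharm x)]
  exact Multiset.single_le_sum
    (fun y hy => by
      obtain ⟨s, _, rfl⟩ := Multiset.mem_map.mp hy
      exact hpos _)
    _ (Multiset.mem_map_of_mem _ ha)

/-- Iterated Harnack along a word. -/
lemma harnack_list {h : G → ℝ} (hharm : ∀ x, lap S h x = 0) (hpos : ∀ x, 0 ≤ h x) :
    ∀ L : List G, (∀ a ∈ L, a ∈ S) → ∀ x,
      h (x + L.sum) ≤ (Multiset.card S : ℝ) ^ L.length * h x := by
  intro L
  induction L with
  | nil => intro _ x; simp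
  | cons a L ih =>
    intro hmem x
    have ha : a ∈ S := hmem a (List.mem_cons_self)
    have hL : ∀ b ∈ L, b ∈ S := fun b hb => hmem b (List.mem_cons_of_mem a hb)
    have h1 : h ((x + a) + L.sum) ≤ (Multiset.card S : ℝ) ^ L.length * h (x + a) :=
      ih hL (x + a)
    have h2 : h (x + a) ≤ (Multiset.card S : ℝ) * h x := harnack_step S hharm hpos ha x
    have hcard : (0 : ℝ) ≤ (Multiset.card S : ℝ) ^ L.length := by positivity
    calc h (x + (a :: L).sum) = h ((x + a) + L.sum) := by
          rw [List.sum_cons, ← add_assoc]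
      _ ≤ (Multiset.card S : ℝ) ^ L.length * h (x + a) := h1
      _ ≤ (Multiset.card S : ℝ) ^ L.length * ((Multiset.card S : ℝ) * h x) := by
          exact mul_le_mul_of_nonneg_left h2 hcard
      _ = (Multiset.card S : ℝ) ^ (a :: L).length * h x := by
          rw [List.length_cons, pow_succ]; ring

/-- Zeros propagate along words. -/
lemma zero_list {h : G → ℝ} (hharm : ∀ x, lap S h x = 0) (hpos : ∀ x, 0 ≤ h x) :
    ∀ L : List G, (∀ a ∈ L, a ∈ S) → ∀ x, h x = 0 → h (x + L.sum) = 0 := by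
  intro L hmem x hx
  have h1 := harnack_list S hharm hpos L hmem x
  rw [hx, mul_zero] at h1
  exact le_antisymm h1 (hpos _)

/-- Every element is a word in the generators. -/
lemma exists_word (hsym : S.map (fun s => -s) = S)
    (hgen : AddSubgroup.closure {s : G | s ∈ S} = ⊤) (x : G) :
    ∃ L : List G, (∀ a ∈ L, a ∈ S) ∧ L.sum = x := by
  have hneg : ∀ a : G, a ∈ S → -a ∈ S := by
    intro a ha
    have : -a ∈ S.map (fun s => -s) := Multiset.mem_map_of_mem _ ha
    rwa [hsym] at this
  let H : AddSubgroup G :=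
    { carrier := {x | ∃ L : List G, (∀ a ∈ L, a ∈ S) ∧ L.sum = x}
      zero_mem' := ⟨[], by simp⟩
      add_mem' := by
        rintro a b ⟨L1, hL1, rfl⟩ ⟨L2, hL2, rfl⟩
        exact ⟨L1 ++ L2, by
          constructor
          · intro c hc
            rcases List.mem_append.mp hc with hc | hc
            · exact hL1 c hc
            · exact hL2 c hc
          · rw [List.sum_append]⟩
      neg_mem' := by
        rintro a ⟨L, hL, rfl⟩
        refine ⟨L.map (fun s => -s), ?_, ?_⟩
        · intro c hc
          obtain ⟨b, hb, rfl⟩ := List.mem_map.mp hc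
          exact hneg b (hL b hb)
        · induction L with
          | nil => simp
          | cons b L ih =>
            simp only [List.map_cons, List.sum_cons, neg_add_rev]
            rw [ih (fun c hc => hL c (List.mem_cons_of_mem b hc))]
            abel }
  have hle : AddSubgroup.closure {s : G | s ∈ S} ≤ H :=
    (AddSubgroup.closure_le H).mpr (fun s hs => ⟨[s], by simpa using hs⟩)
  rw [hgen] at hle
  exact hle (AddSubgroup.mem_top x)

/-- Continuity of the evaluation of the Laplacian. -/
lemma continuous_lap_eval (x : G) : Continuous fun h : G → ℝ => lap S h x := by
  simp only [lap]
  induction S using Multiset.induction with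
  | empty => simpa using continuous_const
  | cons a T ih =>
    simp only [Multiset.map_cons, Multiset.sum_cons]
    exact (((continuous_apply (x + a)).sub (continuous_apply x))).add ih

lemma two_le_add_inv {y : ℝ} (hy : 0 < y) : 2 ≤ y + y⁻¹ := by
  have h : y + y⁻¹ - 2 = (y - 1)^2 / y := by field_simp; ring
  nlinarith [div_nonneg (sq_nonneg (y-1)) hy.le]

lemma eq_one_of_add_inv_eq_two {y : ℝ} (hy : 0 < y) (h : y + y⁻¹ = 2) : y = 1 := by
  have h2 : y * (y + y⁻¹) = y * 2 := by rw [h]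
  rw [mul_add, mul_inv_cancel₀ hy.ne'] at h2
  nlinarith [sq_nonneg (y-1)]

end Aux

section Key

variable {G : Type} [AddCommGroup G]

/-- The key estimate: for a positive harmonic function `f` on an abelian group with
symmetric generating multiset `S`, `f (x + t) ≤ f x` for every generator `t`. -/
lemma key_estimate (S : Multiset G)
    (hsym : S.map (fun s => -s) = S)
    (hgen : AddSubgroup.closure {s : G | s ∈ S} = ⊤)
    (f : G → ℝ) (hharm : ∀ x, lap S f x = 0) (hpos : ∀ x, 0 < f x)
    (t : G) (ht : t ∈ S) (x : G) : f (x + t) ≤ f x := by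
  classical
  set n : ℝ := (Multiset.card S : ℝ) with hn
  have hrep := exists_word S hsym hgen
  choose rep hrepS hrepsum using hrep
  set B : G → ℝ := fun y => n ^ (rep y).length with hB
  have hn1 : (1 : ℝ) ≤ n := by
    have h1 : 0 < Multiset.card S := Multiset.card_pos_iff_exists_mem.mpr ⟨t, ht⟩
    have h2 : (1 : ℕ) ≤ Multiset.card S := h1
    rw [hn]
    exact_mod_cast h2
  have hB1 : ∀ y, (1 : ℝ) ≤ B y := fun y => one_le_pow₀ hn1
  -- The compact class K of normalized nonnegative harmonic functions.
  set K : Set (G → ℝ) := {h | (∀ y, 0 ≤ h y) ∧ (∀ y, lap S h y = 0) ∧ h 0 = 1 ∧ ∀ y, h y ≤ B y}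
    with hK
  -- members of K are everywhere positive
  have hKpos : ∀ h ∈ K, ∀ y, 0 < h y := by
    rintro h ⟨h0, h1, h2, _⟩ y
    rcases lt_or_eq_of_le (h0 y) with hlt | heq
    · exact hlt
    · exfalso
      have hz := zero_list S h1 h0 (rep (-y)) (hrepS _) y heq.symm
      rw [hrepsum, add_neg_cancel, h2] at hz
      norm_num at hz
  -- translation-normalization of any positive harmonic function lands in K
  have htau : ∀ h : G → ℝ, (∀ y, 0 ≤ h y) → (∀ y, lap S h y = 0) → (∀ y, 0 < h y) →
      ∀ z, (fun y => h (z + y) / h z) ∈ K := by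
    intro h h0 h1 hp z
    refine ⟨fun y => div_nonneg (h0 _) (h0 _), ?_, ?_, ?_⟩
    · intro y
      show (S.map fun s => h (z + (y + s)) / h z - h (z + y) / h z).sum = 0
      have he : (S.map fun s => h (z + (y + s)) / h z - h (z + y) / h z)
          = S.map fun s => (h ((z + y) + s) - h (z + y)) * (h z)⁻¹ := by
        apply Multiset.map_congr rfl
        intro s _
        rw [add_assoc, div_sub_div_same, div_eq_mul_inv]
      rw [he, Multiset.sum_map_mul_right]
      have h2 : (S.map fun s => h ((z + y) + s) - h (z + y)).sum = 0 := h1 (z + y)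
      rw [h2, zero_mul]
    · show h (z + 0) / h z = 1
      rw [add_zero]
      exact div_self (hp z).ne'
    · intro y
      have hh := harnack_list S h1 h0 (rep y) (hrepS _) z
      rw [hrepsum] at hh
      rw [div_le_iff₀ (hp z)]
      calc h (z + y) ≤ n ^ (rep y).length * h z := hh
        _ = B y * h z := rfl
  -- K is compact
  have hKcl : IsClosed K := by
    have e1 : IsClosed {h : G → ℝ | ∀ y, 0 ≤ h y} := by
      have he : {h : G → ℝ | ∀ y, 0 ≤ h y} = ⋂ y, {h | 0 ≤ h y} := by
        ext h; simp [Set.mem_iInter]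
      rw [he]
      exact isClosed_iInter fun y => IsClosed.preimage (continuous_apply y) isClosed_Ici
    have e2 : IsClosed {h : G → ℝ | ∀ y, lap S h y = 0} := by
      have he : {h : G → ℝ | ∀ y, lap S h y = 0} = ⋂ y, {h | lap S h y = 0} := by
        ext h; simp [Set.mem_iInter]
      rw [he]
      exact isClosed_iInter fun y => isClosed_eq (continuous_lap_eval S y) continuous_const
    have e3 : IsClosed {h : G → ℝ | h 0 = 1} :=
      isClosed_eq (continuous_apply 0) continuous_const
    have e4 : IsClosed {h : G → ℝ | ∀ y, h y ≤ B y} := by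
      have he : {h : G → ℝ | ∀ y, h y ≤ B y} = ⋂ y, {h | h y ≤ B y} := by
        ext h; simp [Set.mem_iInter]
      rw [he]
      exact isClosed_iInter fun y => IsClosed.preimage (continuous_apply y) isClosed_Iic
    have he : K = {h : G → ℝ | ∀ y, 0 ≤ h y} ∩ ({h | ∀ y, lap S h y = 0} ∩
        ({h | h 0 = 1} ∩ {h | ∀ y, h y ≤ B y})) := by
      ext h
      simp only [hK, Set.mem_setOf_eq, Set.mem_inter_iff]
    rw [he]
    exact e1.inter (e2.inter (e3.inter e4))
  have hKcomp : IsCompact K := by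
    have hsub : K ⊆ Set.univ.pi (fun y => Set.Icc (0 : ℝ) (B y)) := by
      rintro h ⟨h0, _, _, h3⟩ y _
      exact ⟨h0 y, h3 y⟩
    exact (isCompact_univ_pi (fun y => isCompact_Icc)).of_isClosed_subset hKcl hsub
  have hKne : K.Nonempty := by
    refine ⟨fun _ => 1, fun _ => zero_le_one, ?_, rfl, fun y => hB1 y⟩
    intro y; simp [lap]
  -- the notion of a good subclass
  set τ : G → (G → ℝ) → (G → ℝ) := fun z h => fun y => h (z + y) / h z with hτ
  have hτK : ∀ h ∈ K, ∀ z, τ z h ∈ K := by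
    rintro h hh z
    obtain ⟨h0, h1, h2, h3⟩ := hh
    exact htau h h0 h1 (hKpos h ⟨h0, h1, h2, h3⟩) z
  set Good : Set (G → ℝ) → Prop :=
    fun A => A ⊆ K ∧ A.Nonempty ∧ IsClosed A ∧ ∀ h ∈ A, ∀ z, τ z h ∈ A with hGood
  have hKgood : Good K := ⟨le_refl _, hKne, hKcl, hτK⟩
  -- the extremal step
  have step : ∀ A, Good A → ∀ u, u ∈ S → ∃ c : ℝ, ∃ A', Good A' ∧ A' ⊆ A ∧
      (∀ h ∈ A, h u ≤ c) ∧ (∀ h ∈ A', ∀ y, h (y + u) = c * h y) := by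
    rintro A ⟨hAK, hAne, hAcl, hAτ⟩ u hu
    have hAcomp : IsCompact A := hKcomp.of_isClosed_subset hAcl hAK
    obtain ⟨hstar, hhA, hmax⟩ := hAcomp.exists_isMaxOn hAne
      ((continuous_apply u).continuousOn : ContinuousOn (fun h : G → ℝ => h u) A)
    set c : ℝ := hstar u with hc
    have hmax' : ∀ h ∈ A, h u ≤ c := fun h hh => hmax hh
    have hhK := hAK hhA
    obtain ⟨hs0, hs1, hs2, hs3⟩ := hhK
    have hsp := hKpos hstar (hAK hhA)
    -- ratio bound everywhere
    have hratio : ∀ y, hstar (y + u) ≤ c * hstar y := by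
      intro y
      have h4 : (τ y hstar) u ≤ c := hmax' (τ y hstar) (hAτ hstar hhA y)
      have h5 : hstar (y + u) / hstar y ≤ c := h4
      rw [div_le_iff₀ (hsp y)] at h5
      linarith
    -- the deficiency function is nonneg harmonic and vanishes at 0, hence vanishes
    set g : G → ℝ := fun y => c * hstar y - hstar (y + u) with hg
    have hg0 : ∀ y, 0 ≤ g y := fun y => by
      simp only [hg, sub_nonneg]; exact hratio y
    have hgharm : ∀ y, lap S g y = 0 := by
      intro y
      have h6 : lap S g y = c * lap S hstar y - lap S (fun w => hstar (w + u)) y :=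
        lap_smul_sub S c hstar (fun w => hstar (w + u)) y
      rw [h6, lap_translate S hstar u y, hs1, hs1]
      ring
    have hgzero : g 0 = 0 := by
      show c * hstar 0 - hstar (0 + u) = 0
      rw [hs2, zero_add, mul_one, hc]
      exact sub_self _
    have hgall : ∀ y, g y = 0 := by
      intro y
      have h7 := zero_list S hgharm hg0 (rep y) (hrepS _) 0 hgzero
      rwa [hrepsum, zero_add] at h7
    have hmult : ∀ y, hstar (y + u) = c * hstar y := by
      intro y
      have := hgall y
      simp only [hg] at this
      linarith
    -- the new class
    refine ⟨c, A ∩ {h | ∀ y, h (y + u) = c * h y}, ⟨?_, ⟨hstar, hhA, hmult⟩, ?_, ?_⟩,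
      Set.inter_subset_left, hmax', fun h hh => hh.2⟩
    · exact Set.inter_subset_left.trans hAK
    · refine hAcl.inter ?_
      have he : {h : G → ℝ | ∀ y, h (y + u) = c * h y}
          = ⋂ y, {h | h (y + u) = c * h y} := by
        ext h; simp [Set.mem_iInter]
      rw [he]
      exact isClosed_iInter fun y =>
        isClosed_eq (continuous_apply (y + u)) (continuous_const.mul (continuous_apply y))
    · rintro h ⟨hhA', hhmul⟩ z
      refine ⟨hAτ h hhA' z, ?_⟩
      intro y
      show h (z + (y + u)) / h z = c * (h (z + y) / h z)
      rw [← add_assoc, hhmul (z + y)]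
      ring
  -- iterate the extremal step over a list of generators
  have iter : ∀ L : List G, (∀ a ∈ L, a ∈ S) → ∀ A, Good A → ∃ A', Good A' ∧ A' ⊆ A ∧
      ∀ a ∈ L, ∃ c : ℝ, ∀ h ∈ A', ∀ y, h (y + a) = c * h y := by
    intro L
    induction L with
    | nil => intro _ A hA; exact ⟨A, hA, le_refl _, by simp⟩
    | cons a L ih =>
      intro hmem A hA
      obtain ⟨c, A1, hA1, hA1sub, _, hmul⟩ := step A hA a (hmem a (List.mem_cons_self))
      obtain ⟨A2, hA2, hA2sub, hrest⟩ :=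
        ih (fun b hb => hmem b (List.mem_cons_of_mem a hb)) A1 hA1
      refine ⟨A2, hA2, hA2sub.trans hA1sub, ?_⟩
      intro b hb
      rcases List.mem_cons.mp hb with rfl | hb
      · exact ⟨c, fun h hh => hmul h (hA2sub hh)⟩
      · exact hrest b hb
  -- run the argument: first maximize in direction t, then make multiplicative in all of S
  obtain ⟨c, A1, hA1good, _, hmaxK, hmultt⟩ := step K hKgood t ht
  obtain ⟨A2, hA2good, hA2sub, hmult⟩ :=
    iter S.toList (fun a ha => Multiset.mem_toList.mp ha) A1 hA1good
  obtain ⟨h, hhA2⟩ := hA2good.2.1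
  have hhK : h ∈ K := hA2good.1 hhA2
  obtain ⟨h0, h1, h2, h3⟩ := hhK
  have hp : ∀ y, 0 < h y := hKpos h ⟨h0, h1, h2, h3⟩
  -- multiplicativity with explicit constants h a
  have hmul : ∀ a ∈ S, ∀ y, h (y + a) = h a * h y := by
    intro a ha y
    obtain ⟨ca, hca⟩ := hmult a (Multiset.mem_toList.mpr ha)
    have hc0 : h a = ca := by
      have := hca h hhA2 0
      rwa [zero_add, h2, mul_one] at this
    rw [hca h hhA2 y, hc0]
  -- the constant c equals h t
  have hct : c = h t := by
    have := hmultt h (hA2sub hhA2) 0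
    rwa [zero_add, h2, mul_one, eq_comm] at this
  -- sum of the constants is n
  have hsum : (S.map fun a => h a).sum = n := by
    have hs := sum_eq_of_lap_eq_zero S (h1 0)
    rw [h2, mul_one] at hs
    rw [hn, ← hs]
    apply congrArg
    apply Multiset.map_congr rfl
    intro a _
    rw [zero_add]
  -- the constants at inverses are inverses
  have hinv : ∀ a ∈ S, h (-a) = (h a)⁻¹ := by
    intro a ha
    have := hmul a ha (-a)
    rw [neg_add_cancel, h2] at this
    exact eq_inv_of_mul_eq_one_left (by rw [mul_comm]; exact this.symm)
  -- sum of the inverse constants is also n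
  have hsuminv : (S.map fun a => (h a)⁻¹).sum = n := by
    have he1 : (S.map fun a => (h a)⁻¹) = S.map fun a => h (-a) := by
      apply Multiset.map_congr rfl
      intro a ha
      exact (hinv a ha).symm
    have he2 : (S.map fun a => h (-a)) = S.map fun a => h a := by
      have : (S.map fun s => -s).map (fun a => h a) = S.map ((fun a => h a) ∘ (fun s => -s)) :=
        Multiset.map_map _ _ S
      rw [hsym] at this
      exact this.symm
    rw [he1, he2, hsum]
  -- hence each constant equals 1
  have hterm : ∀ a ∈ S, (2 : ℝ) ≤ h a + (h a)⁻¹ := fun a _ => two_le_add_inv (hp a)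
  have htotal : (S.map fun a => (h a + (h a)⁻¹) - 2).sum = 0 := by
    rw [Multiset.sum_map_sub, Multiset.sum_map_add, hsum, hsuminv]
    rw [Multiset.map_const', Multiset.sum_replicate, nsmul_eq_mul]
    ring
  have hone : h t = 1 := by
    have hle : h t + (h t)⁻¹ - 2 ≤ 0 := by
      rw [← htotal]
      exact Multiset.single_le_sum
        (fun y hy => by
          obtain ⟨a, ha, rfl⟩ := Multiset.mem_map.mp hy
          linarith [hterm a ha])
        _ (Multiset.mem_map_of_mem _ ht)
    have hge : (2 : ℝ) ≤ h t + (h t)⁻¹ := hterm t ht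
    exact eq_one_of_add_inv_eq_two (hp t) (by linarith)
  -- conclude: every member of K has value ≤ 1 at t, apply to the translate of f
  have hfin : ∀ h' ∈ K, h' t ≤ 1 := by
    intro h' hh'
    have := hmaxK h' hh'
    rwa [hct, hone] at this
  have hfK : (fun y => f (x + y) / f x) ∈ K :=
    htau f (fun y => (hpos y).le) hharm hpos x
  have := hfin _ hfK
  have h8 : f (x + t) / f x ≤ 1 := this
  rw [div_le_one (hpos x)] at h8
  exact h8

end Key

/-- **Liouville theorem** (Lemma 3.5). On the Cayley graph of a finitely generated abelian
group, every nonnegative harmonic function is constant. -/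
theorem liouville_theorem (m l : ℕ) (q : Fin l → ℕ) (hq : ∀ i, IsPrimePow (q i))
    (S : Multiset (AbG m l q))
    (hsym : S.map (fun s => -s) = S)
    (hgen : AddSubgroup.closure {s : AbG m l q | s ∈ S} = ⊤)
    (f : AbG m l q → ℝ) (hharm : ∀ x, lap S f x = 0) (hpos : ∀ x, 0 ≤ f x) :
    ∀ x y, f x = f y := by
  classical
  intro x y
  have hrep := exists_word S hsym hgen
  by_cases hz : ∃ x₀, f x₀ = 0
  · obtain ⟨x₀, hx₀⟩ := hz
    have hall : ∀ z, f z = 0 := by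
      intro z
      obtain ⟨L, hLS, hLsum⟩ := hrep (z - x₀)
      have := zero_list S hharm hpos L hLS x₀ hx₀
      rwa [hLsum, add_sub_cancel] at this
    rw [hall x, hall y]
  · push_neg at hz
    have hp : ∀ z, 0 < f z := fun z => lt_of_le_of_ne (hpos z) (Ne.symm (hz z))
    have hinvar : ∀ z, ∀ t ∈ S, f (z + t) = f z := by
      intro z t ht
      have h1 : f (z + t) ≤ f z := key_estimate S hsym hgen f hharm hp t ht z
      have hnt : -t ∈ S := by
        have : -t ∈ S.map (fun s => -s) := Multiset.mem_map_of_mem _ ht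
        rwa [hsym] at this
      have h2 : f ((z + t) + -t) ≤ f (z + t) :=
        key_estimate S hsym hgen f hharm hp (-t) hnt (z + t)
      rw [add_assoc, add_neg_cancel, add_zero] at h2
      linarith
    have hlist : ∀ L : List (AbG m l q), (∀ a ∈ L, a ∈ S) → ∀ z, f (z + L.sum) = f z := by
      intro L
      induction L with
      | nil => intro _ z; simp
      | cons a L ih =>
        intro hmem z
        rw [List.sum_cons, ← add_assoc, ih (fun b hb => hmem b (List.mem_cons_of_mem a hb)),
          hinvar z a (hmem a (List.mem_cons_self))]
    obtain ⟨L, hLS, hLsum⟩ := hrep (y - x)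
    have := hlist L hLS x
    rw [hLsum, add_sub_cancel] at this
    exact this.symm
end
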